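/- arXiv:1506.08450 — 6 statements merged into one kernel-verified Lean document; each statement's English description precedes it below -/
import Mathlib

section
/- Any minimizer of f_n over H lies in the finite-dimensional subspace H'_n = H0 + span{χ1 η_1, …, χ1 η_n}. -/
open scoped RealInnerProductSpace

/-- Any minimizer of
`f_n(μ) = (1/n) ∑ i, (y i − ⟪η i, μ⟫)² + λ ‖χ1 μ‖²` over the real Hilbert space
`H = H0 ⊕ H0ᗮ` (with `dim H0 < ∞` and `χ1` the orthogonal projection onto `H1 = H0ᗮ`)
lies in the finite-dimensional subspace `H'_n = H0 + span {χ1 η_1, …, χ1 η_n}`. -/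
theorem minimizer_mem_finite_dimensional_subspace
    {H : Type*} [NormedAddCommGroup H] [InnerProductSpace ℝ H] [CompleteSpace H]
    (H0 : Submodule ℝ H) [FiniteDimensional ℝ H0]
    (n : ℕ) (η : Fin n → H) (y : Fin n → ℝ) (lam : ℝ) (hlam : 0 < lam)
    (μmin : H)
    (hmin : ∀ μ : H,
      (1 / (n : ℝ)) * ∑ i, (y i - ⟪η i, μmin⟫) ^ 2
          + lam * ‖(Submodule.orthogonalProjectionOnto H0ᗮ μmin : H)‖ ^ 2
        ≤ (1 / (n : ℝ)) * ∑ i, (y i - ⟪η i, μ⟫) ^ 2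
          + lam * ‖(Submodule.orthogonalProjectionOnto H0ᗮ μ : H)‖ ^ 2) :
    μmin ∈ H0 ⊔ Submodule.span ℝ
      (Set.range fun i : Fin n => (Submodule.orthogonalProjectionOnto H0ᗮ (η i) : H)) := by
  set S := Submodule.span ℝ
      (Set.range fun i : Fin n => (Submodule.orthogonalProjectionOnto H0ᗮ (η i) : H)) with hS
  set K := H0 ⊔ S with hK
  haveI : FiniteDimensional ℝ S := by
    apply FiniteDimensional.span_of_finite
    exact Set.finite_range _
  haveI : FiniteDimensional ℝ K := Submodule.finiteDimensional_sup H0 S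
  haveI : CompleteSpace K := FiniteDimensional.complete ℝ K
  set p : H := (Submodule.orthogonalProjectionOnto K μmin : H) with hp
  set q : H := μmin - p with hq
  have hqK : q ∈ Kᗮ := Submodule.sub_starProjection_mem_orthogonal μmin
  have hpK : p ∈ K := (Submodule.orthogonalProjectionOnto K μmin).2
  have hH0K : H0 ≤ K := le_sup_left
  have hSK : S ≤ K := le_sup_right
  have hqH0 : q ∈ H0ᗮ := Submodule.orthogonal_le hH0K hqK
  -- q is orthogonal to each η i
  have hinner : ∀ i, ⟪η i, q⟫ = 0 := by
    intro i
    have hdecomp : η i = (Submodule.orthogonalProjectionOnto H0 (η i) : H)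
        + (Submodule.orthogonalProjectionOnto H0ᗮ (η i) : H) := by
      simp only [← Submodule.starProjection_apply]; rw [Submodule.starProjection_orthogonal_val]; abel
    rw [hdecomp, inner_add_left]
    have h1 : ⟪(Submodule.orthogonalProjectionOnto H0 (η i) : H), q⟫ = 0 :=
      Submodule.inner_right_of_mem_orthogonal
        (hH0K (Submodule.orthogonalProjectionOnto H0 (η i)).2) hqK
    have h2 : ⟪(Submodule.orthogonalProjectionOnto H0ᗮ (η i) : H), q⟫ = 0 := by
      refine Submodule.inner_right_of_mem_orthogonal (hSK ?_) hqK
      exact Submodule.subset_span ⟨i, rfl⟩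
    rw [h1, h2]; ring
  have hμ : μmin = p + q := by rw [hq]; abel
  -- χ1 μmin = χ1 p + q
  have hχq : (Submodule.orthogonalProjectionOnto H0ᗮ q : H) = q :=
    congrArg _ (Submodule.orthogonalProjectionOnto_mem_subspace_eq_self (⟨q, hqH0⟩ : H0ᗮ))
  have hχμ : (Submodule.orthogonalProjectionOnto H0ᗮ μmin : H)
      = (Submodule.orthogonalProjectionOnto H0ᗮ p : H) + q := by
    rw [hμ, map_add]; push_cast; rw [hχq]
  have hχpK : (Submodule.orthogonalProjectionOnto H0ᗮ p : H) ∈ K := by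
    have : (Submodule.orthogonalProjectionOnto H0ᗮ p : H) = p - (Submodule.orthogonalProjectionOnto H0 p : H) := by
      simp only [← Submodule.starProjection_apply]; rw [Submodule.starProjection_orthogonal_val]
    rw [this]
    exact K.sub_mem hpK (hH0K (Submodule.orthogonalProjectionOnto H0 p).2)
  have hperp : ⟪(Submodule.orthogonalProjectionOnto H0ᗮ p : H), q⟫ = 0 :=
    Submodule.inner_right_of_mem_orthogonal hχpK hqK
  have hnorm : ‖(Submodule.orthogonalProjectionOnto H0ᗮ μmin : H)‖ ^ 2
      = ‖(Submodule.orthogonalProjectionOnto H0ᗮ p : H)‖ ^ 2 + ‖q‖ ^ 2 := by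
    rw [hχμ]
    rw [norm_add_sq_real, hperp]; ring
  have hsum : ∀ i, ⟪η i, μmin⟫ = ⟪η i, p⟫ := by
    intro i; rw [hμ, inner_add_right, hinner i]; ring
  have h := hmin p
  simp only [hsum, hnorm] at h
  have hq0 : ‖q‖ ^ 2 ≤ 0 := by nlinarith
  have : q = 0 := by
    have := norm_nonneg q
    have : ‖q‖ = 0 := by nlinarith
    exact norm_eq_zero.mp this
  rw [hμ, this, add_zero]
  exact hpK
end

section
/- Assume the nondegeneracy condition: the only μ ∈ H0 with ⟨η_i, μ⟩ = 0 for all i = 1, …, n is μ = 0. Then the bilinear form B(μ, ν) = (1/n) Σ_{i=1}^n ⟨η_i, μ⟩⟨η_i, ν⟩ + λ⟨χ1 μ, χ1 ν⟩ is bounded and coercive on H'_n, and the operator G_{n,λ} restricted to H'_n is a bijection of H'_n onto itself; i.e., for every r ∈ H'_n there exists a unique μ ∈ H'_n with G_{n,λ} μ = r. -/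
open scoped RealInnerProductSpace

/-- Under the nondegeneracy condition (the only `μ ∈ H0` with
`⟪η i, μ⟫ = 0` for all `i` is `μ = 0`), the bilinear form
`B(μ, ν) = (1/n) ∑ i, ⟪η i, μ⟫ ⟪η i, ν⟫ + λ ⟪χ1 μ, χ1 ν⟫` is bounded and coercive on
`H'_n = H0 + span {χ1 η_1, …, χ1 η_n}`, and `G_{n,λ} μ = (1/n) ∑ i, ⟪η i, μ⟫ η i + λ χ1 μ`
restricted to `H'_n` is a bijection of `H'_n` onto itself. -/
theorem bilinear_form_bounded_coercive_and_G_bijective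
    {H : Type*} [NormedAddCommGroup H] [InnerProductSpace ℝ H] [CompleteSpace H]
    (H0 : Submodule ℝ H) [FiniteDimensional ℝ H0]
    (n : ℕ) (η : Fin n → H) (lam : ℝ) (hlam : 0 < lam)
    (B : H → H → ℝ)
    (hB : ∀ μ ν : H, B μ ν = ((1 : ℝ) / n) * ∑ i, ⟪η i, μ⟫ * ⟪η i, ν⟫
      + lam * ⟪(Submodule.orthogonalProjectionOnto H0ᗮ μ : H), (Submodule.orthogonalProjectionOnto H0ᗮ ν : H)⟫)
    (G : H → H)
    (hG : ∀ μ : H, G μ = ((1 : ℝ) / n) • ∑ i, ⟪η i, μ⟫ • η i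
      + lam • (Submodule.orthogonalProjectionOnto H0ᗮ μ : H))
    (H'n : Submodule ℝ H)
    (hH'n : H'n = H0 ⊔ Submodule.span ℝ
      (Set.range fun i : Fin n => (Submodule.orthogonalProjectionOnto H0ᗮ (η i) : H)))
    (hnd : ∀ μ ∈ H0, (∀ i, ⟪η i, μ⟫ = 0) → μ = 0) :
    (∃ C : ℝ, ∀ μ ∈ H'n, ∀ ν ∈ H'n, |B μ ν| ≤ C * ‖μ‖ * ‖ν‖) ∧
    (∃ c : ℝ, 0 < c ∧ ∀ μ ∈ H'n, c * ‖μ‖ ^ 2 ≤ B μ μ) ∧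
    (∀ r ∈ H'n, ∃! μ : H, μ ∈ H'n ∧ G μ = r) := by
  have hPmem : ∀ μ : H, (Submodule.orthogonalProjectionOnto H0ᗮ μ : H) ∈ H0ᗮ :=
    fun μ => (Submodule.orthogonalProjectionOnto H0ᗮ μ).2
  have hPnorm : ∀ μ : H, ‖(Submodule.orthogonalProjectionOnto H0ᗮ μ : H)‖ ≤ ‖μ‖ := fun μ =>
    (Submodule.orthogonalProjectionOnto H0ᗮ).le_opNorm μ |>.trans
      (by nlinarith [Submodule.orthogonalProjectionOnto_norm_le (K := H0ᗮ), norm_nonneg μ])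
  -- P vanishes on H0
  have hPzero : ∀ v ∈ H0, (Submodule.orthogonalProjectionOnto H0ᗮ v : H) = 0 := fun v hv => by
    rw [Submodule.orthogonalProjectionOnto_apply_of_mem_orthogonal (K := H0ᗮ)
      (Submodule.le_orthogonal_orthogonal H0 hv)]
    rfl
  have hPself : ∀ v ∈ H0ᗮ, (Submodule.orthogonalProjectionOnto H0ᗮ v : H) = v := fun v hv =>
    (Submodule.starProjection_eq_self_iff.2 hv)
  -- η i ∈ H'n
  have hη : ∀ i, η i ∈ H'n := by
    intro i
    rw [hH'n]
    have h1 : η i - (Submodule.orthogonalProjectionOnto H0ᗮ (η i) : H) ∈ H0 := by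
      have : η i - (Submodule.orthogonalProjectionOnto H0ᗮ (η i) : H) ∈ H0ᗮᗮ := Submodule.sub_starProjection_mem_orthogonal (K := H0ᗮ) (η i)
      rwa [Submodule.orthogonal_orthogonal] at this
    have h2 : (Submodule.orthogonalProjectionOnto H0ᗮ (η i) : H) ∈
        Submodule.span ℝ (Set.range fun i : Fin n => (Submodule.orthogonalProjectionOnto H0ᗮ (η i) : H)) :=
      Submodule.subset_span ⟨i, rfl⟩
    have := Submodule.add_mem_sup h1 h2
    simpa using this
  -- P maps H'n into H'n
  have hPmaps : ∀ μ ∈ H'n, (Submodule.orthogonalProjectionOnto H0ᗮ μ : H) ∈ H'n := by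
    intro μ hμ
    rw [hH'n] at hμ ⊢
    obtain ⟨a, ha, b, hb, rfl⟩ := Submodule.mem_sup.1 hμ
    have hbo : b ∈ H0ᗮ := by
      refine Submodule.span_le.2 ?_ hb
      rintro _ ⟨i, rfl⟩; exact hPmem _
    have : (Submodule.orthogonalProjectionOnto H0ᗮ (a + b) : H) = b := by
      rw [map_add, Submodule.coe_add, hPzero a ha, hPself b hbo, zero_add]
    rw [this]
    exact Submodule.mem_sup_right hb
  -- G maps H'n into H'n
  have hGmaps : ∀ μ ∈ H'n, G μ ∈ H'n := by
    intro μ hμ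
    rw [hG]
    exact H'n.add_mem
      (H'n.smul_mem _ (H'n.sum_mem fun i _ => H'n.smul_mem _ (hη i)))
      (H'n.smul_mem _ (hPmaps μ hμ))
  -- B on the diagonal
  have hBself : ∀ μ : H, B μ μ = ((1 : ℝ) / n) * ∑ i, ⟪η i, μ⟫ ^ 2
      + lam * ‖(Submodule.orthogonalProjectionOnto H0ᗮ μ : H)‖ ^ 2 := by
    intro μ
    rw [hB, real_inner_self_eq_norm_sq]
    ring_nf
  -- positive definiteness (on all of H, in fact)
  have hBpos : ∀ μ : H, B μ μ = 0 → μ = 0 := by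
    intro μ h0
    rw [hBself] at h0
    have h1 : (0:ℝ) ≤ ((1 : ℝ) / n) * ∑ i, ⟪η i, μ⟫ ^ 2 := by positivity
    have h2 : (0:ℝ) ≤ lam * ‖(Submodule.orthogonalProjectionOnto H0ᗮ μ : H)‖ ^ 2 := by positivity
    have hproj : (Submodule.orthogonalProjectionOnto H0ᗮ μ : H) = 0 := by
      have : lam * ‖(Submodule.orthogonalProjectionOnto H0ᗮ μ : H)‖ ^ 2 = 0 := by linarith
      have := (mul_eq_zero.1 this).resolve_left (ne_of_gt hlam)
      simpa [pow_eq_zero_iff] using this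
    have hμ0 : μ ∈ H0 := by
      have : μ - (Submodule.orthogonalProjectionOnto H0ᗮ μ : H) ∈ H0ᗮᗮ := Submodule.sub_starProjection_mem_orthogonal (K := H0ᗮ) μ
      rw [hproj, sub_zero, Submodule.orthogonal_orthogonal] at this
      exact this
    refine hnd μ hμ0 fun i => ?_
    have hnpos : (0:ℝ) < 1 / n := by
      have : 0 < n := i.pos
      positivity
    have hsum : ∑ j, ⟪η j, μ⟫ ^ 2 = 0 := by
      have : ((1 : ℝ) / n) * ∑ j, ⟪η j, μ⟫ ^ 2 = 0 := by
        rw [hproj] at h0; simpa using h0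
      exact (mul_eq_zero.1 this).resolve_left (ne_of_gt hnpos)
    have := (Finset.sum_eq_zero_iff_of_nonneg (fun j _ => sq_nonneg _)).1 hsum i
      (Finset.mem_univ i)
    exact pow_eq_zero_iff (by norm_num) |>.1 (this)
  have hB0 : B 0 0 = 0 := by rw [hBself]; simp
  -- B is quadratic under scaling
  have hBsmul : ∀ (a : ℝ) (μ : H), B (a • μ) (a • μ) = a ^ 2 * B μ μ := by
    intro a μ
    rw [hBself, hBself]
    have h1 : ∀ i : Fin n, ⟪η i, a • μ⟫ ^ 2 = a ^ 2 * ⟪η i, μ⟫ ^ 2 := by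
      intro i; rw [real_inner_smul_right]; ring
    have h2 : (Submodule.orthogonalProjectionOnto H0ᗮ (a • μ) : H) = a • (Submodule.orthogonalProjectionOnto H0ᗮ μ : H) := by
      rw [map_smul]; rfl
    rw [h2, norm_smul]
    simp only [h1, ← Finset.mul_sum]
    rw [mul_pow]
    simp [Real.norm_eq_abs, sq_abs]
    ring
  -- ⟪G μ, μ⟫ = B μ μ
  have hGB : ∀ μ : H, ⟪G μ, μ⟫ = B μ μ := by
    intro μ
    rw [hG, hB]
    rw [inner_add_left, real_inner_smul_left, real_inner_smul_left, sum_inner]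
    have h1 : ∀ i ∈ Finset.univ, ⟪⟪η i, μ⟫ • η i, μ⟫ = ⟪η i, μ⟫ * ⟪η i, μ⟫ := by
      intro i _; rw [real_inner_smul_left]
    rw [Finset.sum_congr rfl h1]
    have h2 : ⟪(Submodule.orthogonalProjectionOnto H0ᗮ μ : H), μ⟫
        = ⟪(Submodule.orthogonalProjectionOnto H0ᗮ μ : H), (Submodule.orthogonalProjectionOnto H0ᗮ μ : H)⟫ := by
      have h3 : ⟪μ - (Submodule.orthogonalProjectionOnto H0ᗮ μ : H), (Submodule.orthogonalProjectionOnto H0ᗮ μ : H)⟫ = 0 := Submodule.starProjection_inner_eq_zero μ _ (hPmem μ)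
      rw [inner_sub_left] at h3
      rw [real_inner_comm]
      linarith
    rw [h2]
  -- finite dimensionality of H'n
  haveI hfd : FiniteDimensional ℝ H'n := by
    rw [hH'n]
    haveI := FiniteDimensional.span_of_finite ℝ
      (Set.finite_range fun i : Fin n => (Submodule.orthogonalProjectionOnto H0ᗮ (η i) : H))
    exact Submodule.finiteDimensional_sup _ _
  -- Coercivity
  have hcoer : ∃ c : ℝ, 0 < c ∧ ∀ μ ∈ H'n, c * ‖μ‖ ^ 2 ≤ B μ μ := by
    by_cases htriv : ∀ μ ∈ H'n, μ = 0
    · refine ⟨1, one_pos, fun μ hμ => ?_⟩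
      rw [htriv μ hμ, hB0]; simp
    · push_neg at htriv
      obtain ⟨μ0, hμ0, hμ0ne⟩ := htriv
      set x0 : H'n := (‖μ0‖⁻¹ : ℝ) • ⟨μ0, hμ0⟩ with hx0
      have hx0s : x0 ∈ Metric.sphere (0 : H'n) 1 := by
        simp only [mem_sphere_iff_norm, sub_zero, hx0, norm_smul, norm_inv, norm_norm]
        rw [show ‖(⟨μ0, hμ0⟩ : H'n)‖ = ‖μ0‖ from rfl]
        exact inv_mul_cancel₀ (norm_ne_zero_iff.2 hμ0ne)
      have hcont : Continuous fun x : H'n => B (x : H) (x : H) := by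
        have : (fun x : H'n => B (x : H) (x : H)) = fun x : H'n =>
            ((1 : ℝ) / n) * ∑ i, ⟪η i, (x : H)⟫ ^ 2
            + lam * ‖(Submodule.orthogonalProjectionOnto H0ᗮ (x : H) : H)‖ ^ 2 := by
          funext x; rw [hBself]
        rw [this]
        have c1 : Continuous fun x : H'n => (x : H) := continuous_subtype_val
        refine Continuous.add (continuous_const.mul ?_) (continuous_const.mul ?_)
        · exact continuous_finset_sum _ fun i _ => (continuous_const.inner c1).pow 2
        · exact (((Submodule.orthogonalProjectionOnto H0ᗮ).continuous.comp c1).subtype_val.norm).pow 2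
      obtain ⟨x, hx, hxmin'⟩ := (isCompact_sphere (0 : H'n) 1).exists_isMinOn
        ⟨x0, hx0s⟩ hcont.continuousOn
      have hxmin : ∀ y ∈ Metric.sphere (0 : H'n) 1,
          B (x : H) (x : H) ≤ B (y : H) (y : H) := fun y hy => hxmin' hy
      have hxnorm : ‖(x : H)‖ = 1 := by
        simpa [mem_sphere_iff_norm] using hx
      have hxne : (x : H) ≠ 0 := by
        intro h; rw [h, norm_zero] at hxnorm; norm_num at hxnorm
      set c := B (x : H) (x : H) with hc
      have hcpos : 0 < c := by
        rcases lt_or_eq_of_le (by rw [hBself]; positivity :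
            (0:ℝ) ≤ B (x : H) (x : H)) with h | h
        · exact h
        · exact absurd (hBpos _ h.symm) hxne
      refine ⟨c, hcpos, fun μ hμ => ?_⟩
      by_cases hμ0' : μ = 0
      · rw [hμ0', hB0]; simp
      · have hnμ : (0:ℝ) < ‖μ‖ := norm_pos_iff.2 hμ0'
        set y : H'n := (‖μ‖⁻¹ : ℝ) • ⟨μ, hμ⟩ with hy
        have hys : y ∈ Metric.sphere (0 : H'n) 1 := by
          simp only [mem_sphere_iff_norm, sub_zero, hy, norm_smul, norm_inv, norm_norm]
          rw [show ‖(⟨μ, hμ⟩ : H'n)‖ = ‖μ‖ from rfl]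
          exact inv_mul_cancel₀ (norm_ne_zero_iff.2 hμ0')
        have := hxmin y hys
        have hyB : B (y : H) (y : H) = ‖μ‖⁻¹ ^ 2 * B μ μ := by
          rw [show ((y : H'n) : H) = (‖μ‖⁻¹ : ℝ) • μ from rfl, hBsmul]
        rw [hyB] at this
        have := mul_le_mul_of_nonneg_right this (sq_nonneg ‖μ‖)
        calc c * ‖μ‖ ^ 2 ≤ ‖μ‖⁻¹ ^ 2 * B μ μ * ‖μ‖ ^ 2 := this
          _ = B μ μ := by field_simp
  -- Boundedness
  have hbdd : ∃ C : ℝ, ∀ μ ∈ H'n, ∀ ν ∈ H'n, |B μ ν| ≤ C * ‖μ‖ * ‖ν‖ := by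
    refine ⟨((1 : ℝ) / n) * ∑ i, ‖η i‖ ^ 2 + lam, fun μ _ ν _ => ?_⟩
    rw [hB]
    have h1 : |((1 : ℝ) / n) * ∑ i, ⟪η i, μ⟫ * ⟪η i, ν⟫|
        ≤ ((1 : ℝ) / n) * ∑ i, ‖η i‖ ^ 2 * (‖μ‖ * ‖ν‖) := by
      rw [abs_mul, abs_of_nonneg (by positivity : (0:ℝ) ≤ (1:ℝ)/n)]
      refine mul_le_mul_of_nonneg_left ?_ (by positivity)
      refine (Finset.abs_sum_le_sum_abs _ _).trans (Finset.sum_le_sum fun i _ => ?_)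
      rw [abs_mul]
      calc |⟪η i, μ⟫| * |⟪η i, ν⟫| ≤ (‖η i‖ * ‖μ‖) * (‖η i‖ * ‖ν‖) :=
            mul_le_mul (abs_real_inner_le_norm _ _) (abs_real_inner_le_norm _ _)
              (abs_nonneg _) (by positivity)
        _ = ‖η i‖ ^ 2 * (‖μ‖ * ‖ν‖) := by ring
    have h2 : |lam * ⟪(Submodule.orthogonalProjectionOnto H0ᗮ μ : H), (Submodule.orthogonalProjectionOnto H0ᗮ ν : H)⟫|
        ≤ lam * (‖μ‖ * ‖ν‖) := by
      rw [abs_mul, abs_of_nonneg hlam.le]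
      refine mul_le_mul_of_nonneg_left ?_ hlam.le
      calc |⟪(Submodule.orthogonalProjectionOnto H0ᗮ μ : H), (Submodule.orthogonalProjectionOnto H0ᗮ ν : H)⟫|
          ≤ ‖(Submodule.orthogonalProjectionOnto H0ᗮ μ : H)‖ * ‖(Submodule.orthogonalProjectionOnto H0ᗮ ν : H)‖ :=
            abs_real_inner_le_norm _ _
        _ ≤ ‖μ‖ * ‖ν‖ := mul_le_mul (hPnorm μ) (hPnorm ν) (norm_nonneg _) (norm_nonneg _)
    calc |((1 : ℝ) / n) * ∑ i, ⟪η i, μ⟫ * ⟪η i, ν⟫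
          + lam * ⟪(Submodule.orthogonalProjectionOnto H0ᗮ μ : H), (Submodule.orthogonalProjectionOnto H0ᗮ ν : H)⟫|
        ≤ ((1 : ℝ) / n) * ∑ i, ‖η i‖ ^ 2 * (‖μ‖ * ‖ν‖) + lam * (‖μ‖ * ‖ν‖) :=
          (abs_add_le _ _).trans (add_le_add h1 h2)
      _ = (((1 : ℝ) / n) * ∑ i, ‖η i‖ ^ 2 + lam) * ‖μ‖ * ‖ν‖ := by
          rw [← Finset.sum_mul]; ring
  -- Bijectivity
  refine ⟨hbdd, hcoer, ?_⟩
  -- G as a linear map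
  let Gclm : H →L[ℝ] H := ((1 : ℝ) / n) • (∑ i, (innerSL ℝ (η i)).smulRight (η i))
    + lam • (H0ᗮ.subtypeL.comp (Submodule.orthogonalProjectionOnto H0ᗮ))
  have hGeq : ∀ μ : H, Gclm μ = G μ := by
    intro μ
    simp [Gclm, hG, ContinuousLinearMap.sum_apply]
  let Glin : H →ₗ[ℝ] H := (Gclm : H →L[ℝ] H)
  have hGmaps' : ∀ x ∈ H'n, Glin x ∈ H'n := by
    intro x hx
    show Gclm x ∈ H'n
    rw [hGeq]
    exact hGmaps x hx
  let T : H'n →ₗ[ℝ] H'n := Glin.restrict hGmaps'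
  have hTinj : Function.Injective T := by
    rw [← LinearMap.ker_eq_bot, LinearMap.ker_eq_bot']
    intro m hm
    have hGm : G (m : H) = 0 := by
      have := congrArg (Subtype.val) hm
      rw [← hGeq]
      simpa [T, Glin, LinearMap.restrict_apply] using this
    have : B (m : H) (m : H) = 0 := by rw [← hGB, hGm, inner_zero_left]
    exact Subtype.ext (hBpos _ this)
  have hTsurj : Function.Surjective T := LinearMap.injective_iff_surjective.1 hTinj
  intro r hr
  obtain ⟨x, hx⟩ := hTsurj ⟨r, hr⟩
  refine ⟨(x : H), ⟨x.2, ?_⟩, ?_⟩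
  · have := congrArg (Subtype.val) hx
    rw [← hGeq]
    simpa [T, LinearMap.restrict_apply, Glin] using this
  · rintro y ⟨hy, hGy⟩
    have : T ⟨y, hy⟩ = ⟨r, hr⟩ := Subtype.ext
      (by simpa [T, LinearMap.restrict_apply, Glin, hGeq] using hGy)
    have := hTinj (this.trans hx.symm)
    exact congrArg Subtype.val this
end

section
/- Assume the nondegeneracy condition: the only μ ∈ H0 with ⟨η_i, μ⟩ = 0 for all i = 1, …, n is μ = 0. Then f_n has a unique minimizer μ^n over H; moreover μ^n lies in H'_n = H0 + span{χ1 η_1, …, χ1 η_n} and satisfies G_{n,λ} μ^n = (1/n) Σ_{i=1}^n y_i η_i. -/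
open scoped RealInnerProductSpace

/-- Under the nondegeneracy condition (the only `μ ∈ H0` with
`⟪η i, μ⟫ = 0` for all `i` is `μ = 0`), the functional
`f_n(μ) = (1/n) ∑ i, (y i − ⟪η i, μ⟫)² + λ ‖χ1 μ‖²` has a unique minimizer `μⁿ` over `H`;
moreover `μⁿ` lies in `H'_n = H0 + span {χ1 η_1, …, χ1 η_n}` and satisfies
`G_{n,λ} μⁿ = (1/n) ∑ i, y i • η i`. -/
theorem unique_minimizer_of_spline_functional
    {H : Type*} [NormedAddCommGroup H] [InnerProductSpace ℝ H] [CompleteSpace H]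
    (H0 : Submodule ℝ H) [FiniteDimensional ℝ H0]
    (n : ℕ) (η : Fin n → H) (y : Fin n → ℝ) (lam : ℝ) (hlam : 0 < lam)
    (f : H → ℝ)
    (hf : ∀ μ : H, f μ = (1 / (n : ℝ)) * ∑ i, (y i - ⟪η i, μ⟫) ^ 2
      + lam * ‖(Submodule.orthogonalProjectionOnto H0ᗮ μ : H)‖ ^ 2)
    (G : H → H)
    (hG : ∀ μ : H, G μ = ((1 : ℝ) / n) • ∑ i, ⟪η i, μ⟫ • η i
      + lam • (Submodule.orthogonalProjectionOnto H0ᗮ μ : H))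
    (hnd : ∀ μ ∈ H0, (∀ i, ⟪η i, μ⟫ = 0) → μ = 0) :
    ∃ μn : H, (∀ μ : H, f μn ≤ f μ) ∧
      (∀ μ' : H, (∀ μ : H, f μ' ≤ f μ) → μ' = μn) ∧
      μn ∈ H0 ⊔ Submodule.span ℝ
        (Set.range fun i : Fin n => (Submodule.orthogonalProjectionOnto H0ᗮ (η i) : H)) ∧
      G μn = ((1 : ℝ) / n) • ∑ i, y i • η i := by
  classical
  haveI : CompleteSpace H0 := FiniteDimensional.complete ℝ H0
  set PP : H → H := fun v => (Submodule.orthogonalProjectionOnto H0ᗮ v : H) with hPPdef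
  have hPPmem : ∀ u : H, PP u ∈ H0ᗮ := by
    intro u; rw [hPPdef]; exact Submodule.coe_mem _
  have hPPself : ∀ u v : H, ⟪PP u, PP v⟫ = ⟪PP u, v⟫ := by
    intro u v
    have h := (Submodule.starProjection_inner_eq_zero (K := H0ᗮ) v (PP u) (hPPmem u) : ⟪v - PP v, PP u⟫ = 0)
    rw [inner_sub_left, sub_eq_zero] at h
    rw [real_inner_comm (PP v) (PP u), real_inner_comm v (PP u)]
    simp only [hPPdef] at h ⊢
    exact h.symm
  have hdecomp : ∀ v : H, v = (Submodule.orthogonalProjectionOnto H0 v : H) + PP v := by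
    intro v
    exact (Submodule.starProjection_add_starProjection_orthogonal (K := H0) v).symm
  have hf' : ∀ μ : H, f μ = (1 / (n : ℝ)) * ∑ i, (y i - ⟪η i, μ⟫) ^ 2
      + lam * ‖PP μ‖ ^ 2 := by
    intro μ; rw [hf μ, hPPdef]
  -- the operator as a continuous linear map
  set Gc : H →L[ℝ] H := ((1:ℝ)/n) • (∑ i, (innerSL ℝ (η i)).smulRight (η i))
      + lam • (H0ᗮ.subtypeL.comp (Submodule.orthogonalProjectionOnto H0ᗮ)) with hGcdef
  have hGc : ∀ μ : H, Gc μ = ((1:ℝ)/n) • ∑ i, ⟪η i, μ⟫ • η i + lam • PP μ := by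
    intro μ
    simp [hGcdef, ContinuousLinearMap.sum_apply, hPPdef]
  have hGinner : ∀ μ δ : H, ⟪Gc μ, δ⟫
      = (1/(n:ℝ)) * ∑ i, ⟪η i, μ⟫ * ⟪η i, δ⟫ + lam * ⟪PP μ, δ⟫ := by
    intro μ δ
    rw [hGc, inner_add_left, real_inner_smul_left, real_inner_smul_left, sum_inner]
    simp [real_inner_smul_left]
  -- the finite-dimensional subspace
  set W : Submodule ℝ H := H0 ⊔ Submodule.span ℝ (Set.range fun i : Fin n => PP (η i))
    with hWdef
  haveI : FiniteDimensional ℝ (Submodule.span ℝ (Set.range fun i : Fin n => PP (η i))) :=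
    FiniteDimensional.span_of_finite ℝ (Set.finite_range _)
  haveI : FiniteDimensional ℝ W := Submodule.finiteDimensional_sup _ _
  have hηW : ∀ i, η i ∈ W := by
    intro i
    rw [hdecomp (η i)]
    exact W.add_mem (Submodule.mem_sup_left (Submodule.coe_mem _))
      (Submodule.mem_sup_right (Submodule.subset_span ⟨i, rfl⟩))
  have hPPW : ∀ v ∈ W, PP v ∈ W := by
    intro v hv
    have h : PP v = v - (Submodule.orthogonalProjectionOnto H0 v : H) := eq_sub_of_add_eq' (hdecomp v).symm
    rw [h]
    exact W.sub_mem hv (Submodule.mem_sup_left (Submodule.coe_mem _))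
  have hGW : ∀ v ∈ W, Gc v ∈ W := by
    intro v hv
    rw [hGc]
    exact W.add_mem
      (W.smul_mem _ (Submodule.sum_mem _ fun i _ => W.smul_mem _ (hηW i)))
      (W.smul_mem _ (hPPW v hv))
  set T : W →ₗ[ℝ] W := (Gc : H →ₗ[ℝ] H).restrict hGW with hTdef
  -- positivity of the quadratic form
  have hQpos : ∀ δ : H, 0 ≤ (1/(n:ℝ)) * ∑ i, ⟪η i, δ⟫^2 + lam * ‖PP δ‖^2 := by
    intro δ
    have h1 : (0:ℝ) ≤ 1/(n:ℝ) := by positivity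
    exact add_nonneg (mul_nonneg h1 (Finset.sum_nonneg fun i _ => sq_nonneg _))
      (mul_nonneg hlam.le (sq_nonneg _))
  have hQzero : ∀ δ : H, (1/(n:ℝ)) * ∑ i, ⟪η i, δ⟫^2 + lam * ‖PP δ‖^2 = 0 → δ = 0 := by
    intro δ h
    have h1 : (0:ℝ) ≤ (1/(n:ℝ)) * ∑ i, ⟪η i, δ⟫^2 :=
      mul_nonneg (by positivity) (Finset.sum_nonneg fun i _ => sq_nonneg _)
    have h2 : (0:ℝ) ≤ lam * ‖PP δ‖^2 := mul_nonneg hlam.le (sq_nonneg _)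
    have hb : lam * ‖PP δ‖^2 = 0 := by linarith
    have ha : (1/(n:ℝ)) * ∑ i, ⟪η i, δ⟫^2 = 0 := by linarith
    have hPδ : PP δ = 0 := by
      have hnz : ‖PP δ‖^2 = 0 := by
        rcases mul_eq_zero.mp hb with h' | h'
        · exact absurd h' hlam.ne'
        · exact h'
      simpa using pow_eq_zero_iff two_ne_zero |>.mp hnz
    have hmem : δ ∈ H0 := by
      have hz : Submodule.orthogonalProjectionOnto H0ᗮ δ = 0 := by
        rw [← ZeroMemClass.coe_eq_zero]
        simpa [hPPdef] using hPδ
      have := Submodule.orthogonalProjectionOnto_eq_zero_iff.mp hz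
      rwa [Submodule.orthogonal_orthogonal] at this
    refine hnd δ hmem fun i => ?_
    have hn0 : (0:ℝ) < (n:ℝ) := by exact_mod_cast i.pos
    have hsum0 : ∑ j, ⟪η j, δ⟫^2 = 0 := by
      have hne : (1/(n:ℝ)) ≠ 0 := by positivity
      exact (mul_eq_zero.mp ha).resolve_left hne
    have := (Finset.sum_eq_zero_iff_of_nonneg (fun j _ => sq_nonneg _)).mp hsum0 i
      (Finset.mem_univ i)
    exact pow_eq_zero_iff two_ne_zero |>.mp this
  -- T is injective, hence surjective
  have hTinj : Function.Injective T := by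
    rw [← LinearMap.ker_eq_bot, LinearMap.ker_eq_bot']
    intro x hx
    have hx' : Gc (x : H) = 0 := by
      have := congrArg (Subtype.val) hx
      simpa [hTdef, LinearMap.restrict_apply] using this
    have h0 : ⟪Gc (x:H), (x:H)⟫ = 0 := by rw [hx']; simp
    rw [hGinner] at h0
    have hp : ⟪PP (x:H), (x:H)⟫ = ‖PP (x:H)‖^2 := by
      rw [← hPPself]; exact real_inner_self_eq_norm_sq _
    rw [hp] at h0
    have h0' : (1/(n:ℝ)) * ∑ i, ⟪η i, (x:H)⟫^2 + lam * ‖PP (x:H)‖^2 = 0 := by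
      rw [← h0]; congr 1; congr 1; exact Finset.sum_congr rfl fun i _ => (sq _)
    exact Subtype.ext (hQzero _ h0')
  have hTsurj : Function.Surjective T := LinearMap.injective_iff_surjective.mp hTinj
  set b : H := ((1:ℝ)/n) • ∑ i, y i • η i with hbdef
  have hbW : b ∈ W := W.smul_mem _ (Submodule.sum_mem _ fun i _ => W.smul_mem _ (hηW i))
  obtain ⟨x, hx⟩ := hTsurj ⟨b, hbW⟩
  set μn : H := (x : H) with hμndef
  have hGb : Gc μn = b := by
    have := congrArg Subtype.val hx
    simpa [hTdef, LinearMap.restrict_apply] using this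
  have hcross0 : ∀ δ : H,
      (1/(n:ℝ)) * ∑ i, (⟪η i, μn⟫ - y i) * ⟪η i, δ⟫ + lam * ⟪PP μn, δ⟫ = 0 := by
    intro δ
    have h1 : ⟪Gc μn, δ⟫ = ⟪b, δ⟫ := by rw [hGb]
    rw [hGinner] at h1
    have h2 : ⟪b, δ⟫ = (1/(n:ℝ)) * ∑ i, y i * ⟪η i, δ⟫ := by
      rw [hbdef, real_inner_smul_left, sum_inner]
      simp [real_inner_smul_left]
    rw [h2] at h1
    have h3 : ∑ i, (⟪η i, μn⟫ - y i) * ⟪η i, δ⟫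
        = ∑ i, ⟪η i, μn⟫ * ⟪η i, δ⟫ - ∑ i, y i * ⟪η i, δ⟫ := by
      rw [← Finset.sum_sub_distrib]
      exact Finset.sum_congr rfl fun i _ => by ring
    rw [h3]
    linear_combination h1
  have hkey : ∀ ν : H, f ν
      = f μn + ((1/(n:ℝ)) * ∑ i, ⟪η i, ν - μn⟫^2 + lam * ‖PP (ν - μn)‖^2) := by
    intro ν
    have hν : ν = μn + (ν - μn) := by abel
    have hinner : ∀ i, ⟪η i, ν⟫ = ⟪η i, μn⟫ + ⟪η i, ν - μn⟫ := fun i => by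
      rw [inner_sub_right]; ring
    have hPν : PP ν = PP μn + PP (ν - μn) := by
      simp only [hPPdef, map_sub, Submodule.coe_sub]
      abel
    rw [hf' ν, hf' μn]
    have hsum : ∑ i, (y i - ⟪η i, ν⟫)^2
        = ∑ i, ((y i - ⟪η i, μn⟫)^2 + (2 * ((⟪η i, μn⟫ - y i) * ⟪η i, ν - μn⟫)
            + ⟪η i, ν - μn⟫^2)) := by
      exact Finset.sum_congr rfl fun i _ => by rw [hinner i]; ring
    have hnorm : ‖PP ν‖^2 = ‖PP μn‖^2 + (2*⟪PP μn, ν - μn⟫ + ‖PP (ν - μn)‖^2) := by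
      rw [hPν, norm_add_sq_real, hPPself]
      ring
    rw [hsum, hnorm, Finset.sum_add_distrib, Finset.sum_add_distrib, ← Finset.mul_sum]
    linear_combination 2 * hcross0 (ν - μn)
  refine ⟨μn, ?_, ?_, ?_, ?_⟩
  · intro μ
    rw [hkey μ]
    have := hQpos (μ - μn)
    linarith
  · intro μ' hμ'
    have h1 : f μ' ≤ f μn := hμ' μn
    rw [hkey μ'] at h1
    have h0 : (1/(n:ℝ)) * ∑ i, ⟪η i, μ' - μn⟫^2 + lam * ‖PP (μ' - μn)‖^2 = 0 :=
      le_antisymm (by linarith) (hQpos _)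
    exact sub_eq_zero.mp (hQzero _ h0)
  · have hxW : μn ∈ W := x.2
    simpa only [hWdef, hPPdef] using hxW
  · have h := (hGc μn).symm.trans hGb
    simp only [hPPdef] at h
    rw [hG μn]
    exact h
end

section
/- Suppose the empirical measures P_n = (1/n) Σ_{i=1}^n δ_{(t_i, y_i)} converge weakly to a finite Borel measure P on I × ℝ, and λ_n ≥ 0. Then for every ν ∈ H and every sequence ν^n converging weakly to ν in H, ∫_{I×ℝ} (y − ⟨η_t, ν⟩)² P(d(t,y)) ≤ liminf_{n→∞} [ (1/n) Σ_{i=1}^n (y_i − ⟨η_{t_i}, ν^n⟩)² + λ_n ‖χ1 ν^n‖² ]. -/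
open MeasureTheory Filter
open scoped RealInnerProductSpace

/-- A sequence in a normed space converges weakly to `l` if `F (x n) → F l` for every
bounded linear functional `F`. -/
def WeakConvSeq {X : Type*} [NormedAddCommGroup X] [NormedSpace ℝ X]
    (x : ℕ → X) (l : X) : Prop :=
  ∀ F : X →L[ℝ] ℝ, Tendsto (fun n => F (x n)) atTop (nhds (F l))

private lemma clamp_facts (c x : ℝ) (hc : 0 ≤ c) :
    |max (-c) (min c x)| ≤ c ∧ max (-c) (min c x) * max (-c) (min c x) ≤ max (-c) (min c x) * x := by
  constructor
  · rw [abs_le]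
    exact ⟨le_max_left _ _, max_le (by linarith) (min_le_left _ _)⟩
  · rcases le_total 0 x with hx | hx
    · have hm : max (-c) (min c x) = min c x :=
        max_eq_right (le_trans (by linarith) (le_min hc hx))
      rw [hm]
      exact mul_le_mul_of_nonneg_left (min_le_right _ _) (le_min hc hx)
    · have hmin : min c x = x := min_eq_right (le_trans hx hc)
      rw [hmin]
      have h1 : x ≤ max (-c) x := le_max_right _ _
      have h2 : max (-c) x ≤ 0 := max_le (by linarith) hx
      nlinarith

private lemma theta_mem (M : ℕ) (x : ℝ) :
    0 ≤ min 1 (max 0 ((M : ℝ) + 1 - |x|)) ∧ min 1 (max 0 ((M : ℝ) + 1 - |x|)) ≤ 1 :=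
  ⟨le_min zero_le_one (le_max_left _ _), min_le_left _ _⟩

private lemma theta_mul_abs (M : ℕ) (x : ℝ) :
    min 1 (max 0 ((M : ℝ) + 1 - |x|)) * |x| ≤ (M : ℝ) + 1 := by
  rcases le_total |x| ((M : ℝ) + 1) with h | h
  · calc min 1 (max 0 ((M : ℝ) + 1 - |x|)) * |x| ≤ 1 * |x| :=
          mul_le_mul_of_nonneg_right (min_le_left _ _) (abs_nonneg x)
    _ ≤ (M : ℝ) + 1 := by rw [one_mul]; exact h
  · have h1 : max 0 ((M : ℝ) + 1 - |x|) = 0 := max_eq_left (by linarith)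
    rw [h1]
    have h2 : min 1 (0 : ℝ) = 0 := min_eq_right zero_le_one
    rw [h2, zero_mul]
    positivity

private lemma q_bounds (θv cv bv : ℝ) (h0 : 0 ≤ θv) (h1 : θv ≤ 1) (hsq : cv * cv ≤ cv * bv) :
    0 ≤ 2 * (θv * cv) * bv - (θv * cv) ^ 2 ∧ 2 * (θv * cv) * bv - (θv * cv) ^ 2 ≤ bv ^ 2 := by
  constructor
  · have ha : 0 ≤ θv * (cv * bv - cv * cv) := mul_nonneg h0 (by linarith)
    have hb : 0 ≤ (θv * (2 - θv)) * (cv * cv) :=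
      mul_nonneg (mul_nonneg h0 (by linarith)) (mul_self_nonneg cv)
    nlinarith
  · nlinarith [sq_nonneg (bv - θv * cv)]

/-- Uniform boundedness of a weakly convergent sequence (via Banach–Steinhaus in the dual). -/
private lemma weak_bounded {H : Type*} [NormedAddCommGroup H] [InnerProductSpace ℝ H]
    (ν : H) (νn : ℕ → H) (hν : WeakConvSeq νn ν) :
    ∃ C : ℝ, 0 ≤ C ∧ ∀ n, ‖νn n‖ ≤ C := by
  have h : ∀ F : H →L[ℝ] ℝ, ∃ C, ∀ n,
      ‖(NormedSpace.inclusionInDoubleDual ℝ H (νn n)) F‖ ≤ C := by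
    intro F
    obtain ⟨C, hC⟩ := (hν F).norm.bddAbove_range
    exact ⟨C, fun n => hC (Set.mem_range_self n)⟩
  obtain ⟨C', hC'⟩ :=
    banach_steinhaus (g := fun n => NormedSpace.inclusionInDoubleDual ℝ H (νn n)) h
  refine ⟨max C' 0, le_max_right _ _, fun n => ?_⟩
  rcases eq_or_lt_of_le (norm_nonneg (νn n)) with h0 | h0
  · rw [← h0]; exact le_max_right _ _
  have key : ‖νn n‖ * ‖νn n‖ ≤ C' * ‖νn n‖ := by
    have h1 : (NormedSpace.inclusionInDoubleDual ℝ H (νn n)) (innerSL ℝ (νn n))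
        = ⟪νn n, νn n⟫ := rfl
    have h2 : ‖(NormedSpace.inclusionInDoubleDual ℝ H (νn n)) (innerSL ℝ (νn n))‖
        ≤ ‖NormedSpace.inclusionInDoubleDual ℝ H (νn n)‖ * ‖innerSL ℝ (νn n)‖ :=
      ContinuousLinearMap.le_opNorm _ _
    rw [h1, innerSL_apply_norm] at h2
    have h3 : ⟪νn n, νn n⟫ = ‖νn n‖ * ‖νn n‖ := real_inner_self_eq_norm_mul_norm (νn n)
    have h4 : ‖⟪νn n, νn n⟫‖ = ‖νn n‖ * ‖νn n‖ := by
      rw [h3, Real.norm_eq_abs, abs_of_nonneg (mul_self_nonneg _)]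
    rw [h4] at h2
    calc ‖νn n‖ * ‖νn n‖ ≤ ‖NormedSpace.inclusionInDoubleDual ℝ H (νn n)‖ * ‖νn n‖ := h2
    _ ≤ C' * ‖νn n‖ := mul_le_mul_of_nonneg_right (hC' n) (norm_nonneg _)
  have := le_of_mul_le_mul_right key h0
  exact le_trans this (le_max_left _ _)

/-- The main approximation lemma: empirical means of a bounded continuous
`H`-valued function are eventually within `ε` of a fixed vector. -/
private lemma gseq_approx
    {X : Type*} [MetricSpace X] [SecondCountableTopology X]
    [MeasurableSpace X] [OpensMeasurableSpace X]
    {H : Type*} [NormedAddCommGroup H] [NormedSpace ℝ H]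
    (P : Measure X) [IsFiniteMeasure P] (hPmass : (∫ x, (1 : ℝ) ∂P) = 1)
    (z : ℕ → X)
    (hemp : ∀ h : BoundedContinuousFunction X ℝ,
      Tendsto (fun n : ℕ => (1 / (n : ℝ)) * ∑ i ∈ Finset.range n, h (z i)) atTop
        (nhds (∫ x, h x ∂P)))
    (G : X → H) (hG : Continuous G) (C₀ : ℝ) (hC₀ : 0 ≤ C₀) (hGbd : ∀ x, ‖G x‖ ≤ C₀)
    (ε : ℝ) (hε : 0 < ε) :
    ∃ w : H, ∀ᶠ n : ℕ in atTop,
      ‖(1 / (n : ℝ)) • ∑ i ∈ Finset.range n, G (z i) - w‖ ≤ ε := by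
  classical
  have hX : Nonempty X := ⟨z 0⟩
  set ε₁ : ℝ := ε / 4 with hε₁def
  have hε₁ : 0 < ε₁ := by positivity
  set ε₂ : ℝ := ε / (16 * (C₀ + 1)) with hε₂def
  have hε₂ : 0 < ε₂ := by positivity
  -- radii of continuity
  have hrad : ∀ x : X, ∃ r : ℝ, 0 < r ∧ ∀ p : X, dist p x < r → ‖G p - G x‖ ≤ ε₁ := by
    intro x
    obtain ⟨δ, hδ, hδ'⟩ := Metric.continuousAt_iff.mp (hG.continuousAt (x := x)) ε₁ hε₁
    exact ⟨δ, hδ, fun p hp => by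
      have := hδ' hp
      rw [dist_eq_norm] at this
      exact this.le⟩
  choose r hr0 hr using hrad
  -- countable subcover by half-radius balls
  have hcover : ⋃ x : X, Metric.ball x (r x / 2) = Set.univ := by
    apply Set.eq_univ_of_forall
    intro p
    exact Set.mem_iUnion.mpr ⟨p, Metric.mem_ball_self (half_pos (hr0 p))⟩
  obtain ⟨T, hTc, hTu⟩ := TopologicalSpace.isOpen_iUnion_countable
    (fun x : X => Metric.ball x (r x / 2)) (fun _ => Metric.isOpen_ball)
  have hTne : T.Nonempty := by
    rcases Set.eq_empty_or_nonempty T with hT | hT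
    · exfalso
      have hempty : (⋃ x ∈ T, Metric.ball x (r x / 2)) = ∅ := by simp [hT]
      rw [hTu, hcover] at hempty
      exact (Set.univ_nonempty).ne_empty hempty
    · exact hT
  obtain ⟨c, hc⟩ := hTc.exists_eq_range hTne
  have hcov : ∀ p : X, ∃ k : ℕ, dist p (c k) < r (c k) / 2 := by
    intro p
    have hp : p ∈ ⋃ x ∈ T, Metric.ball x (r x / 2) := by
      rw [hTu, hcover]; trivial
    rw [hc, Set.biUnion_range] at hp
    obtain ⟨k, hk⟩ := Set.mem_iUnion.mp hp
    exact ⟨k, by simpa [Metric.mem_ball] using hk⟩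
  -- bump functions
  set ψ : ℕ → X → ℝ := fun k p => min 1 (max 0 (2 - 2 * dist p (c k) / r (c k))) with hψdef
  have hψ0 : ∀ k p, 0 ≤ ψ k p := fun k p => le_min zero_le_one (le_max_left _ _)
  have hψ1 : ∀ k p, ψ k p ≤ 1 := fun k p => min_le_left _ _
  have hψcont : ∀ k, Continuous (ψ k) := by
    intro k
    apply Continuous.min continuous_const
    apply Continuous.max continuous_const
    exact continuous_const.sub
      ((continuous_const.mul (continuous_id.dist continuous_const)).div_const _)
  have hψ_one : ∀ k p, dist p (c k) < r (c k) / 2 → ψ k p = 1 := by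
    intro k p hp
    have hrk := hr0 (c k)
    have h1 : (1 : ℝ) ≤ 2 - 2 * dist p (c k) / r (c k) := by
      rw [le_sub_iff_add_le]
      have h2 : 2 * dist p (c k) / r (c k) ≤ 1 := by
        rw [div_le_one hrk]; linarith
      linarith
    have h2 : max 0 (2 - 2 * dist p (c k) / r (c k)) = 2 - 2 * dist p (c k) / r (c k) :=
      max_eq_right (by linarith)
    simp only [hψdef, h2]
    exact min_eq_left h1
  have hψ_supp : ∀ k p, r (c k) ≤ dist p (c k) → ψ k p = 0 := by
    intro k p hp
    have hrk := hr0 (c k)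
    have h1 : 2 - 2 * dist p (c k) / r (c k) ≤ 0 := by
      have h2 : (2 : ℝ) ≤ 2 * dist p (c k) / r (c k) := by
        rw [le_div_iff₀ hrk]; linarith
      linarith
    have h2 : max 0 (2 - 2 * dist p (c k) / r (c k)) = 0 := max_eq_left h1
    simp only [hψdef, h2]
    exact min_eq_right zero_le_one
  -- partition of unity
  set φ : ℕ → X → ℝ := fun k p => ψ k p * ∏ j ∈ Finset.range k, (1 - ψ j p) with hφdef
  set Ψ : ℕ → X → ℝ := fun K p => ∑ k ∈ Finset.range K, φ k p with hΨdef
  have hprod01 : ∀ (K : ℕ) (p : X), 0 ≤ ∏ j ∈ Finset.range K, (1 - ψ j p) ∧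
      ∏ j ∈ Finset.range K, (1 - ψ j p) ≤ 1 := by
    intro K p
    constructor
    · exact Finset.prod_nonneg fun j _ => by linarith [hψ1 j p]
    · exact Finset.prod_le_one (fun j _ => by linarith [hψ1 j p])
        (fun j _ => by linarith [hψ0 j p])
  have hφ0 : ∀ k p, 0 ≤ φ k p := fun k p =>
    mul_nonneg (hψ0 k p) (hprod01 k p).1
  have hφ1 : ∀ k p, φ k p ≤ 1 := by
    intro k p
    calc φ k p ≤ 1 * 1 := mul_le_mul (hψ1 k p) (hprod01 k p).2 (hprod01 k p).1 zero_le_one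
    _ = 1 := mul_one 1
  have hΨ_eq : ∀ K p, Ψ K p = 1 - ∏ k ∈ Finset.range K, (1 - ψ k p) := by
    intro K p
    induction K with
    | zero => simp [hΨdef]
    | succ K ih =>
      have hstep : Ψ (K + 1) p = Ψ K p + φ K p := by
        simp only [hΨdef]
        rw [Finset.sum_range_succ]
      rw [hstep, ih, Finset.prod_range_succ, hφdef]
      ring
  have hΨ0 : ∀ K p, 0 ≤ Ψ K p := fun K p =>
    Finset.sum_nonneg fun k _ => hφ0 k p
  have hΨ1 : ∀ K p, Ψ K p ≤ 1 := by
    intro K p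
    rw [hΨ_eq]
    linarith [(hprod01 K p).1]
  have hΨcont : ∀ K, Continuous (Ψ K) := by
    intro K
    apply continuous_finset_sum
    intro k _
    exact (hψcont k).mul (continuous_finset_prod _ fun j _ => continuous_const.sub (hψcont j))
  -- pointwise convergence of Ψ to 1
  have hΨpt : ∀ p : X, Tendsto (fun K => Ψ K p) atTop (nhds 1) := by
    intro p
    obtain ⟨k, hk⟩ := hcov p
    apply tendsto_const_nhds.congr'
    filter_upwards [eventually_ge_atTop (k + 1)] with K hK
    rw [hΨ_eq]
    have hzero : ∏ j ∈ Finset.range K, (1 - ψ j p) = 0 :=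
      Finset.prod_eq_zero (Finset.mem_range.mpr hK) (by rw [hψ_one k p hk]; ring)
    rw [hzero]; ring
  -- choose K with ∫ Ψ K ≥ 1 - ε₂
  have hΨint : Tendsto (fun K => ∫ p, Ψ K p ∂P) atTop (nhds 1) := by
    have hdom := tendsto_integral_of_dominated_convergence (μ := P)
      (F := fun K p => Ψ K p) (f := fun _ => (1 : ℝ)) (bound := fun _ => (1 : ℝ))
      (fun K => (hΨcont K).aestronglyMeasurable)
      (integrable_const 1)
      (fun K => Eventually.of_forall fun p => by
        rw [Real.norm_eq_abs, abs_of_nonneg (hΨ0 K p)]; exact hΨ1 K p)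
      (Eventually.of_forall fun p => hΨpt p)
    rwa [hPmass] at hdom
  obtain ⟨K, hK⟩ : ∃ K : ℕ, 1 - ε₂ < ∫ p, Ψ K p ∂P :=
    (hΨint.eventually (eventually_gt_nhds (by linarith))).exists
  -- bounded continuous versions
  have hφbd : ∀ k, ∀ p : X, ‖φ k p‖ ≤ 1 := fun k p => by
    rw [Real.norm_eq_abs, abs_of_nonneg (hφ0 k p)]; exact hφ1 k p
  -- limit vector
  set w : H := ∑ k ∈ Finset.range K, (∫ p, φ k p ∂P) • G (c k) with hwdef
  refine ⟨w, ?_⟩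
  set wn : ℕ → H := fun n =>
    ∑ k ∈ Finset.range K, ((1 / (n : ℝ)) * ∑ i ∈ Finset.range n, φ k (z i)) • G (c k) with hwndef
  set Sn : ℕ → ℝ := fun n => (1 / (n : ℝ)) * ∑ i ∈ Finset.range n, Ψ K (z i) with hSndef
  have hwnlim : Tendsto wn atTop (nhds w) := by
    simp only [hwndef, hwdef]
    apply tendsto_finset_sum
    intro k _
    have hk := hemp (BoundedContinuousFunction.ofNormedAddCommGroup (φ k)
      ((hψcont k).mul (continuous_finset_prod _ fun j _ => continuous_const.sub (hψcont j)))
      1 (hφbd k))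
    simp only [BoundedContinuousFunction.coe_ofNormedAddCommGroup] at hk
    exact hk.smul_const (G (c k))
  have hSnlim : Tendsto Sn atTop (nhds (∫ p, Ψ K p ∂P)) := by
    have hk := hemp (BoundedContinuousFunction.ofNormedAddCommGroup (Ψ K) (hΨcont K) 1
      (fun p => by rw [Real.norm_eq_abs, abs_of_nonneg (hΨ0 K p)]; exact hΨ1 K p))
    simp only [BoundedContinuousFunction.coe_ofNormedAddCommGroup] at hk
    exact hk
  -- pointwise estimate
  have hpt : ∀ p : X, ‖G p - ∑ k ∈ Finset.range K, φ k p • G (c k)‖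
      ≤ ε₁ + C₀ * (1 - Ψ K p) := by
    intro p
    have hid : G p - ∑ k ∈ Finset.range K, φ k p • G (c k)
        = (1 - Ψ K p) • G p + ∑ k ∈ Finset.range K, φ k p • (G p - G (c k)) := by
      have h1 : ∑ k ∈ Finset.range K, φ k p • (G p - G (c k))
          = (∑ k ∈ Finset.range K, φ k p) • G p - ∑ k ∈ Finset.range K, φ k p • G (c k) := by
        rw [Finset.sum_smul, ← Finset.sum_sub_distrib]
        exact Finset.sum_congr rfl fun k _ => smul_sub _ _ _
      simp only [hΨdef]
      rw [h1, sub_smul, one_smul]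
      abel
    rw [hid]
    calc ‖(1 - Ψ K p) • G p + ∑ k ∈ Finset.range K, φ k p • (G p - G (c k))‖
        ≤ ‖(1 - Ψ K p) • G p‖ + ‖∑ k ∈ Finset.range K, φ k p • (G p - G (c k))‖ :=
          norm_add_le _ _
    _ ≤ C₀ * (1 - Ψ K p) + ε₁ := by
        apply add_le_add
        · rw [norm_smul, Real.norm_eq_abs, abs_of_nonneg (by linarith [hΨ1 K p]), mul_comm]
          exact mul_le_mul_of_nonneg_right (hGbd p) (by linarith [hΨ1 K p])
        · calc ‖∑ k ∈ Finset.range K, φ k p • (G p - G (c k))‖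
              ≤ ∑ k ∈ Finset.range K, ‖φ k p • (G p - G (c k))‖ := norm_sum_le _ _
          _ ≤ ∑ k ∈ Finset.range K, φ k p * ε₁ := by
              apply Finset.sum_le_sum
              intro k _
              rw [norm_smul, Real.norm_eq_abs, abs_of_nonneg (hφ0 k p)]
              rcases eq_or_lt_of_le (hφ0 k p) with h0 | h0
              · rw [← h0]; simp
              · apply mul_le_mul_of_nonneg_left _ (hφ0 k p)
                have hψne : ψ k p ≠ 0 := by
                  intro hzero
                  rw [hφdef] at h0
                  simp only [hzero, zero_mul] at h0
                  exact lt_irrefl 0 h0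
                have hdist : dist p (c k) < r (c k) := by
                  by_contra hge
                  exact hψne (hψ_supp k p (le_of_not_gt hge))
                exact hr (c k) p hdist
          _ = (∑ k ∈ Finset.range K, φ k p) * ε₁ := (Finset.sum_mul _ _ _).symm
          _ ≤ 1 * ε₁ := by
              apply mul_le_mul_of_nonneg_right _ hε₁.le
              have := hΨ1 K p
              simp only [hΨdef] at this
              exact this
          _ = ε₁ := one_mul _
    _ = ε₁ + C₀ * (1 - Ψ K p) := by ring
  -- empirical estimate
  have hgnwn : ∀ n : ℕ, 1 ≤ n →
      ‖(1 / (n : ℝ)) • ∑ i ∈ Finset.range n, G (z i) - wn n‖ ≤ ε₁ + C₀ * (1 - Sn n) := by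
    intro n hn
    have hnR : (0 : ℝ) < (n : ℝ) := by
      have : (1 : ℝ) ≤ (n : ℝ) := by exact_mod_cast hn
      linarith
    have hne : (n : ℝ) ≠ 0 := ne_of_gt hnR
    have hwn_eq : wn n = (1 / (n : ℝ)) • ∑ i ∈ Finset.range n,
        ∑ k ∈ Finset.range K, φ k (z i) • G (c k) := by
      calc wn n = ∑ k ∈ Finset.range K,
            (1 / (n : ℝ)) • ∑ i ∈ Finset.range n, φ k (z i) • G (c k) := by
            simp only [hwndef]
            exact Finset.sum_congr rfl fun k _ => by rw [mul_smul, Finset.sum_smul]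
      _ = (1 / (n : ℝ)) • ∑ k ∈ Finset.range K,
            ∑ i ∈ Finset.range n, φ k (z i) • G (c k) := (Finset.smul_sum).symm
      _ = (1 / (n : ℝ)) • ∑ i ∈ Finset.range n,
            ∑ k ∈ Finset.range K, φ k (z i) • G (c k) := by rw [Finset.sum_comm]
    have hdiff : (1 / (n : ℝ)) • ∑ i ∈ Finset.range n, G (z i) - wn n
        = (1 / (n : ℝ)) • ∑ i ∈ Finset.range n,
            (G (z i) - ∑ k ∈ Finset.range K, φ k (z i) • G (c k)) := by
      rw [hwn_eq, ← smul_sub, Finset.sum_sub_distrib]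
    rw [hdiff, norm_smul, Real.norm_eq_abs,
      abs_of_nonneg (by positivity : (0 : ℝ) ≤ 1 / (n : ℝ))]
    calc (1 / (n : ℝ)) * ‖∑ i ∈ Finset.range n,
            (G (z i) - ∑ k ∈ Finset.range K, φ k (z i) • G (c k))‖
        ≤ (1 / (n : ℝ)) * ∑ i ∈ Finset.range n, (ε₁ + C₀ * (1 - Ψ K (z i))) := by
          apply mul_le_mul_of_nonneg_left _ (by positivity)
          exact (norm_sum_le _ _).trans (Finset.sum_le_sum fun i _ => hpt (z i))
    _ = ε₁ + C₀ * (1 - Sn n) := by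
        have hsum : ∑ i ∈ Finset.range n, C₀ * (1 - Ψ K (z i))
            = C₀ * ((n : ℝ) - ∑ i ∈ Finset.range n, Ψ K (z i)) := by
          rw [← Finset.mul_sum, Finset.sum_sub_distrib, Finset.sum_const, Finset.card_range,
            nsmul_eq_mul, mul_one]
        rw [Finset.sum_add_distrib, Finset.sum_const, Finset.card_range, nsmul_eq_mul, hsum]
        simp only [hSndef]
        field_simp
  -- combine
  have hev1 : ∀ᶠ n : ℕ in atTop, 1 - 2 * ε₂ ≤ Sn n := by
    have h1 : ∀ᶠ n : ℕ in atTop, 1 - 2 * ε₂ < Sn n :=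
      hSnlim.eventually (eventually_gt_nhds (by linarith))
    filter_upwards [h1] with n hn
    exact hn.le
  have hev2 : ∀ᶠ n : ℕ in atTop, ‖wn n - w‖ ≤ ε / 4 := by
    obtain ⟨N, hN⟩ := Metric.tendsto_atTop.mp hwnlim (ε / 4) (by positivity)
    rw [eventually_atTop]
    exact ⟨N, fun n hn => by
      have := hN n hn
      rw [dist_eq_norm] at this
      exact this.le⟩
  filter_upwards [hev1, hev2, eventually_ge_atTop 1] with n h1 h2 hn
  have h3 := hgnwn n hn
  calc ‖(1 / (n : ℝ)) • ∑ i ∈ Finset.range n, G (z i) - w‖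
      ≤ ‖(1 / (n : ℝ)) • ∑ i ∈ Finset.range n, G (z i) - wn n‖ + ‖wn n - w‖ := by
        have htri := norm_add_le ((1 / (n : ℝ)) • ∑ i ∈ Finset.range n, G (z i) - wn n) (wn n - w)
        simpa using htri
  _ ≤ (ε₁ + C₀ * (1 - Sn n)) + ε / 4 := add_le_add h3 h2
  _ ≤ ε₁ + C₀ * (2 * ε₂) + ε / 4 := by
      have h4 : 1 - Sn n ≤ 2 * ε₂ := by linarith
      have h5 := mul_le_mul_of_nonneg_left h4 hC₀
      linarith
  _ ≤ ε := by
      have hC1 : (0 : ℝ) < C₀ + 1 := by linarith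
      have h6 : C₀ * (2 * ε₂) ≤ ε / 8 := by
        rw [hε₂def]
        have h7 : C₀ / (C₀ + 1) ≤ 1 := by rw [div_le_one hC1]; linarith
        calc C₀ * (2 * (ε / (16 * (C₀ + 1)))) = C₀ / (C₀ + 1) * (ε / 8) := by
              field_simp
              ring
        _ ≤ 1 * (ε / 8) := mul_le_mul_of_nonneg_right h7 (by positivity)
        _ = ε / 8 := one_mul _
      rw [hε₁def]
      linarith

/-- From approximability and weak convergence, convergence of the pairings. -/
private lemma inner_pair_tendsto {H : Type*} [NormedAddCommGroup H] [InnerProductSpace ℝ H]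
    (ν : H) (νn : ℕ → H) (hν : WeakConvSeq νn ν)
    (C : ℝ) (hC0 : 0 ≤ C) (hC : ∀ n, ‖νn n‖ ≤ C)
    (g : ℕ → H) (s : ℝ)
    (happrox : ∀ ε : ℝ, 0 < ε → ∃ w : H, ∀ᶠ n : ℕ in atTop, ‖g n - w‖ ≤ ε)
    (hgν : Tendsto (fun n => ⟪g n, ν⟫) atTop (nhds s)) :
    Tendsto (fun n => ⟪g n, νn n⟫) atTop (nhds s) := by
  rw [Metric.tendsto_atTop]
  intro ε' hε'
  set δ : ℝ := ε' / (4 * (C + ‖ν‖ + 1)) with hδdef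
  have hδ0 : 0 < δ := by positivity
  obtain ⟨w, hw⟩ := happrox δ hδ0
  have hwv : |⟪w, ν⟫ - s| ≤ δ * ‖ν‖ := by
    have h1 : Tendsto (fun n => |⟪g n, ν⟫ - ⟪w, ν⟫|) atTop (nhds |s - ⟪w, ν⟫|) :=
      (hgν.sub tendsto_const_nhds).abs
    have h2 : ∀ᶠ n : ℕ in atTop, |⟪g n, ν⟫ - ⟪w, ν⟫| ≤ δ * ‖ν‖ := by
      filter_upwards [hw] with n hn
      have h3 : ⟪g n, ν⟫ - ⟪w, ν⟫ = ⟪g n - w, ν⟫ := (inner_sub_left _ _ _).symm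
      rw [h3]
      exact le_trans (abs_real_inner_le_norm _ _)
        (mul_le_mul_of_nonneg_right hn (norm_nonneg ν))
    have h4 := le_of_tendsto h1 h2
    rwa [abs_sub_comm] at h4
  have hwtend : Tendsto (fun n => ⟪w, νn n⟫) atTop (nhds ⟪w, ν⟫) := by
    have := hν (innerSL ℝ w)
    simpa using this
  obtain ⟨N₁, hN₁⟩ := Metric.tendsto_atTop.mp hwtend (ε' / 4) (by positivity)
  obtain ⟨N₂, hN₂⟩ := eventually_atTop.mp hw
  refine ⟨max N₁ N₂, fun n hn => ?_⟩
  have hn1 : N₁ ≤ n := le_trans (le_max_left _ _) hn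
  have hn2 : N₂ ≤ n := le_trans (le_max_right _ _) hn
  have e1 : |⟪g n - w, νn n⟫| ≤ δ * C :=
    le_trans (abs_real_inner_le_norm _ _)
      (mul_le_mul (hN₂ n hn2) (hC n) (norm_nonneg _) hδ0.le)
  have e2 : |⟪w, νn n⟫ - ⟪w, ν⟫| < ε' / 4 := by
    have := hN₁ n hn1
    rwa [Real.dist_eq] at this
  rw [Real.dist_eq]
  have split : ⟪g n, νn n⟫ - s
      = ⟪g n - w, νn n⟫ + (⟪w, νn n⟫ - ⟪w, ν⟫) + (⟪w, ν⟫ - s) := by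
    rw [inner_sub_left]
    ring
  rw [split]
  have habs : |⟪g n - w, νn n⟫ + (⟪w, νn n⟫ - ⟪w, ν⟫) + (⟪w, ν⟫ - s)|
      ≤ |⟪g n - w, νn n⟫| + |⟪w, νn n⟫ - ⟪w, ν⟫| + |⟪w, ν⟫ - s| :=
    (abs_add_le _ _).trans (add_le_add_left (abs_add_le _ _) _)
  have hδsum : δ * C + δ * ‖ν‖ ≤ ε' / 4 := by
    have h4 : δ * (C + ‖ν‖) ≤ δ * (C + ‖ν‖ + 1) :=
      mul_le_mul_of_nonneg_left (by linarith) hδ0.le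
    have h5 : δ * (C + ‖ν‖ + 1) = ε' / 4 := by
      rw [hδdef]
      field_simp
    nlinarith
  calc |⟪g n - w, νn n⟫ + (⟪w, νn n⟫ - ⟪w, ν⟫) + (⟪w, ν⟫ - s)|
      ≤ |⟪g n - w, νn n⟫| + |⟪w, νn n⟫ - ⟪w, ν⟫| + |⟪w, ν⟫ - s| := habs
  _ ≤ δ * C + |⟪w, νn n⟫ - ⟪w, ν⟫| + δ * ‖ν‖ := by
      apply add_le_add (add_le_add_left e1 _) hwv
  _ < δ * C + ε' / 4 + δ * ‖ν‖ := by linarith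
  _ ≤ ε' / 4 + ε' / 4 := by linarith
  _ < ε' := by linarith

/-- **liminf inequality.** Let `H` be a real Hilbert space with orthogonal
projection `χ1` onto a closed subspace, `I ⊆ ℝ^d`, `η : I → H` continuous with `‖η t‖ ≤ α`,
`(t i, y i)` a sequence in `I × ℝ` whose empirical measures converge weakly to the finite
Borel measure `P`, and `λ n ≥ 0`. Then for every `ν ∈ H` and every sequence `νn ⇀ ν` weakly
in `H`,
`∫ (y − ⟪η t, ν⟫)² dP ≤ liminf_n [(1/n) ∑_{i<n} (y i − ⟪η (t i), νn n⟫)² + λ n ‖χ1 (νn n)‖²]`. -/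
theorem gamma_liminf_inequality
    {H : Type*} [NormedAddCommGroup H] [InnerProductSpace ℝ H]
    (H1 : Submodule ℝ H) [H1.HasOrthogonalProjection]
    {d : ℕ} (I : Set (EuclideanSpace ℝ (Fin d)))
    (η : I → H) (α : ℝ) (hηbd : ∀ s : I, ‖η s‖ ≤ α) (hηcont : Continuous η)
    (t : ℕ → I) (y : ℕ → ℝ)
    (lam : ℕ → ℝ) (hlam : ∀ n, 0 ≤ lam n)
    (P : Measure (I × ℝ)) [IsFiniteMeasure P]
    (hweak : ∀ h : BoundedContinuousFunction (I × ℝ) ℝ,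
      Tendsto (fun n : ℕ => (1 / (n : ℝ)) * ∑ i ∈ Finset.range n, h (t i, y i))
        atTop (nhds (∫ z, h z ∂P)))
    (ν : H) (νn : ℕ → H) (hν : WeakConvSeq νn ν) :
    ((∫ z : I × ℝ, (z.2 - ⟪η z.1, ν⟫) ^ 2 ∂P : ℝ) : EReal)
      ≤ liminf (fun n : ℕ =>
          (((1 / (n : ℝ)) * ∑ i ∈ Finset.range n, (y i - ⟪η (t i), νn n⟫) ^ 2
            + lam n * ‖(H1.orthogonalProjectionOnto (νn n) : H)‖ ^ 2 : ℝ) : EReal))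
        atTop := by
  classical
  have hα0 : 0 ≤ α := le_trans (norm_nonneg _) (hηbd (t 0))
  -- nonnegativity of the terms
  have htermnn : ∀ n : ℕ, (0 : ℝ) ≤ (1 / (n : ℝ)) * ∑ i ∈ Finset.range n,
      (y i - ⟪η (t i), νn n⟫) ^ 2 + lam n * ‖(H1.orthogonalProjectionOnto (νn n) : H)‖ ^ 2 := by
    intro n
    have h1 : (0 : ℝ) ≤ (1 / (n : ℝ)) := by positivity
    have h2 : (0 : ℝ) ≤ ∑ i ∈ Finset.range n, (y i - ⟪η (t i), νn n⟫) ^ 2 :=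
      Finset.sum_nonneg fun i _ => sq_nonneg _
    have h3 := hlam n
    have h4 : (0 : ℝ) ≤ ‖(H1.orthogonalProjectionOnto (νn n) : H)‖ ^ 2 := sq_nonneg _
    nlinarith
  have hliminf0 : (0 : EReal) ≤ liminf (fun n : ℕ =>
      (((1 / (n : ℝ)) * ∑ i ∈ Finset.range n, (y i - ⟪η (t i), νn n⟫) ^ 2
        + lam n * ‖(H1.orthogonalProjectionOnto (νn n) : H)‖ ^ 2 : ℝ) : EReal)) atTop := by
    refine le_liminf_of_le (by isBoundedDefault) (Eventually.of_forall fun n => ?_)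
    rw [show (0 : EReal) = ((0 : ℝ) : EReal) from rfl]
    exact EReal.coe_le_coe_iff.mpr (htermnn n)
  -- continuity of the residual
  have hbc : Continuous (fun p : I × ℝ => p.2 - ⟪η p.1, ν⟫) :=
    continuous_snd.sub ((hηcont.comp continuous_fst).inner continuous_const)
  -- total mass one
  have hPmass : (∫ x : I × ℝ, (1 : ℝ) ∂P) = 1 := by
    have h1 := hweak (BoundedContinuousFunction.const _ (1 : ℝ))
    simp only [BoundedContinuousFunction.const_apply] at h1
    have h2 : Tendsto (fun n : ℕ => (1 / (n : ℝ)) * ∑ i ∈ Finset.range n, (1 : ℝ))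
        atTop (nhds 1) := by
      apply tendsto_const_nhds.congr'
      filter_upwards [eventually_ge_atTop 1] with n hn
      have hne : (n : ℝ) ≠ 0 := by
        have : (1 : ℝ) ≤ (n : ℝ) := by exact_mod_cast hn
        linarith
      rw [Finset.sum_const, Finset.card_range, nsmul_eq_mul, mul_one]
      field_simp
    exact tendsto_nhds_unique h1 h2
  -- reduce to an ε-statement
  suffices key : ∀ ε : ℝ, 0 < ε →
      ((∫ z : I × ℝ, (z.2 - ⟪η z.1, ν⟫) ^ 2 ∂P - ε : ℝ) : EReal)
        ≤ liminf (fun n : ℕ =>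
            (((1 / (n : ℝ)) * ∑ i ∈ Finset.range n, (y i - ⟪η (t i), νn n⟫) ^ 2
              + lam n * ‖(H1.orthogonalProjectionOnto (νn n) : H)‖ ^ 2 : ℝ) : EReal)) atTop by
    have htends : Tendsto (fun k : ℕ =>
        ((∫ z : I × ℝ, (z.2 - ⟪η z.1, ν⟫) ^ 2 ∂P - 1 / ((k : ℝ) + 1) : ℝ) : EReal)) atTop
        (nhds ((∫ z : I × ℝ, (z.2 - ⟪η z.1, ν⟫) ^ 2 ∂P : ℝ) : EReal)) := by
      apply EReal.tendsto_coe.mpr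
      have := tendsto_const_nhds (x := (∫ z : I × ℝ, (z.2 - ⟪η z.1, ν⟫) ^ 2 ∂P : ℝ))
        (f := atTop (α := ℕ))
      have h2 := this.sub tendsto_one_div_add_atTop_nhds_zero_nat
      simpa using h2
    exact le_of_tendsto htends (Eventually.of_forall fun k => key _ (by positivity))
  intro ε hε
  by_cases hint : Integrable (fun p : I × ℝ => (p.2 - ⟪η p.1, ν⟫) ^ 2) P
  swap
  · rw [show (∫ z : I × ℝ, (z.2 - ⟪η z.1, ν⟫) ^ 2 ∂P : ℝ)
      = ∫ p : I × ℝ, (p.2 - ⟪η p.1, ν⟫) ^ 2 ∂P from rfl, integral_undef hint]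
    refine le_trans ?_ hliminf0
    rw [show (0 : EReal) = ((0 : ℝ) : EReal) from rfl]
    exact EReal.coe_le_coe_iff.mpr (by linarith)
  -- truncations
  set θf : ℕ → ℝ → ℝ := fun M x => min 1 (max 0 ((M : ℝ) + 1 - |x|)) with hθfdef
  set clf : ℕ → ℝ → ℝ := fun M x => max (-(M : ℝ)) (min (M : ℝ) x) with hclfdef
  set uf : ℕ → I × ℝ → ℝ := fun M p => θf M p.2 * clf M (p.2 - ⟪η p.1, ν⟫) with hufdef
  set qf : ℕ → I × ℝ → ℝ :=
    fun M p => 2 * uf M p * (p.2 - ⟪η p.1, ν⟫) - (uf M p) ^ 2 with hqfdef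
  have hθfacts : ∀ M x, 0 ≤ θf M x ∧ θf M x ≤ 1 := by
    intro M x
    simp only [hθfdef]
    exact theta_mem M x
  have hclfacts : ∀ (M : ℕ) (x : ℝ), |clf M x| ≤ (M : ℝ) ∧ clf M x * clf M x ≤ clf M x * x := by
    intro M x
    simp only [hclfdef]
    exact clamp_facts (M : ℝ) x (Nat.cast_nonneg M)
  have hqfacts : ∀ M p, 0 ≤ qf M p ∧ qf M p ≤ (p.2 - ⟪η p.1, ν⟫) ^ 2 := by
    intro M p
    simp only [hqfdef, hufdef]
    exact q_bounds (θf M p.2) (clf M (p.2 - ⟪η p.1, ν⟫)) (p.2 - ⟪η p.1, ν⟫)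
      (hθfacts M p.2).1 (hθfacts M p.2).2 (hclfacts M _).2
  have hufcont : ∀ M, Continuous (uf M) := by
    intro M
    simp only [hufdef, hθfdef, hclfdef]
    apply Continuous.mul
    · apply Continuous.min continuous_const
      apply Continuous.max continuous_const
      exact continuous_const.sub (continuous_abs.comp continuous_snd)
    · exact Continuous.max continuous_const (Continuous.min continuous_const hbc)
  have hufbd : ∀ M p, |uf M p| ≤ (M : ℝ) := by
    intro M p
    simp only [hufdef]
    rw [abs_mul]
    calc |θf M p.2| * |clf M (p.2 - ⟪η p.1, ν⟫)| ≤ 1 * (M : ℝ) := by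
          apply mul_le_mul _ (hclfacts M _).1 (abs_nonneg _) zero_le_one
          rw [abs_of_nonneg (hθfacts M p.2).1]
          exact (hθfacts M p.2).2
    _ = (M : ℝ) := one_mul _
  have hufy : ∀ M (p : I × ℝ), |uf M p * p.2| ≤ (M : ℝ) * ((M : ℝ) + 1) := by
    intro M p
    simp only [hufdef]
    have h1 : |θf M p.2 * clf M (p.2 - ⟪η p.1, ν⟫) * p.2|
        = |clf M (p.2 - ⟪η p.1, ν⟫)| * (θf M p.2 * |p.2|) := by
      rw [abs_mul, abs_mul, abs_of_nonneg (hθfacts M p.2).1]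
      ring
    rw [h1]
    apply mul_le_mul (hclfacts M _).1 _ (mul_nonneg (hθfacts M p.2).1 (abs_nonneg _))
      (Nat.cast_nonneg M)
    simpa only [hθfdef] using theta_mul_abs M p.2
  -- dominated convergence to pick M
  have hqcont : ∀ M, Continuous (qf M) := by
    intro M
    simp only [hqfdef]
    exact ((continuous_const.mul (hufcont M)).mul hbc).sub ((hufcont M).pow 2)
  have hq_tendsto : Tendsto (fun M : ℕ => ∫ p, qf M p ∂P) atTop
      (nhds (∫ p : I × ℝ, (p.2 - ⟪η p.1, ν⟫) ^ 2 ∂P)) := by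
    apply tendsto_integral_of_dominated_convergence
      (bound := fun p : I × ℝ => (p.2 - ⟪η p.1, ν⟫) ^ 2)
      (fun M => (hqcont M).aestronglyMeasurable) hint
    · intro M
      apply Eventually.of_forall
      intro p
      rw [Real.norm_eq_abs, abs_of_nonneg (hqfacts M p).1]
      exact (hqfacts M p).2
    · apply Eventually.of_forall
      intro p
      obtain ⟨M₀, hM₀⟩ := exists_nat_ge (max |p.2| |p.2 - ⟪η p.1, ν⟫|)
      apply tendsto_const_nhds.congr'
      filter_upwards [eventually_ge_atTop M₀] with M hM
      have hMM : (M₀ : ℝ) ≤ (M : ℝ) := by exact_mod_cast hM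
      have h1 : |p.2| ≤ (M : ℝ) := le_trans (le_trans (le_max_left _ _) hM₀) hMM
      have h2 : |p.2 - ⟪η p.1, ν⟫| ≤ (M : ℝ) := le_trans (le_trans (le_max_right _ _) hM₀) hMM
      have hθ1 : θf M p.2 = 1 := by
        simp only [hθfdef]
        rw [max_eq_right (by linarith : (0:ℝ) ≤ (M : ℝ) + 1 - |p.2|)]
        exact min_eq_left (by linarith)
      have hcl1 : clf M (p.2 - ⟪η p.1, ν⟫) = p.2 - ⟪η p.1, ν⟫ := by
        simp only [hclfdef]
        rw [min_eq_right (abs_le.mp h2).2]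
        exact max_eq_right (abs_le.mp h2).1
      simp only [hqfdef, hufdef, hθ1, hcl1, one_mul]
      ring
  obtain ⟨M, hM⟩ : ∃ M : ℕ, ∫ p : I × ℝ, (p.2 - ⟪η p.1, ν⟫) ^ 2 ∂P - ε < ∫ p, qf M p ∂P :=
    (hq_tendsto.eventually (eventually_gt_nhds (sub_lt_self _ hε))).exists
  -- the two scalar test functions
  set h₁ : I × ℝ → ℝ := fun p => 2 * uf M p * p.2 - (uf M p) ^ 2 with hh₁def
  set h₂ : I × ℝ → ℝ := fun p => uf M p * ⟪η p.1, ν⟫ with hh₂def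
  have hh₁cont : Continuous h₁ := by
    simp only [hh₁def]
    exact ((continuous_const.mul (hufcont M)).mul continuous_snd).sub ((hufcont M).pow 2)
  have hh₂cont : Continuous h₂ := by
    simp only [hh₂def]
    exact (hufcont M).mul ((hηcont.comp continuous_fst).inner continuous_const)
  have hh₁bd : ∀ p : I × ℝ, ‖h₁ p‖ ≤ 2 * ((M : ℝ) * ((M : ℝ) + 1)) + (M : ℝ) ^ 2 := by
    intro p
    simp only [hh₁def]
    rw [Real.norm_eq_abs]
    have h1 : |2 * uf M p * p.2 - (uf M p) ^ 2| ≤ |2 * uf M p * p.2| + |(uf M p) ^ 2| :=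
      abs_sub _ _
    have h2 : |2 * uf M p * p.2| = 2 * |uf M p * p.2| := by
      rw [mul_assoc, abs_mul]
      simp
    have h3 : |(uf M p) ^ 2| = |uf M p| ^ 2 := by
      rw [abs_pow]
    have h4 : |uf M p| ^ 2 ≤ (M : ℝ) ^ 2 :=
      pow_le_pow_left₀ (abs_nonneg _) (hufbd M p) 2
    have h5 := hufy M p
    rw [h2, h3] at h1
    linarith
  have hh₂bd : ∀ p : I × ℝ, ‖h₂ p‖ ≤ (M : ℝ) * (α * ‖ν‖) := by
    intro p
    simp only [hh₂def]
    rw [Real.norm_eq_abs, abs_mul]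
    apply mul_le_mul (hufbd M p) _ (abs_nonneg _) (Nat.cast_nonneg M)
    calc |⟪η p.1, ν⟫| ≤ ‖η p.1‖ * ‖ν‖ := abs_real_inner_le_norm _ _
    _ ≤ α * ‖ν‖ := mul_le_mul_of_nonneg_right (hηbd p.1) (norm_nonneg ν)
  have hint₁ : Integrable h₁ P := by
    have := (BoundedContinuousFunction.ofNormedAddCommGroup h₁ hh₁cont _ hh₁bd).integrable P
    simpa only [BoundedContinuousFunction.coe_ofNormedAddCommGroup] using this
  have hint₂ : Integrable h₂ P := by
    have := (BoundedContinuousFunction.ofNormedAddCommGroup h₂ hh₂cont _ hh₂bd).integrable P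
    simpa only [BoundedContinuousFunction.coe_ofNormedAddCommGroup] using this
  have hqint_eq : ∫ p, qf M p ∂P = ∫ p, h₁ p ∂P - 2 * ∫ p, h₂ p ∂P := by
    have hfe : (fun p => qf M p) = fun p => h₁ p - 2 * h₂ p := by
      funext p
      simp only [hqfdef, hh₁def, hh₂def]
      ring
    rw [hfe, integral_sub hint₁ (hint₂.const_mul 2), integral_const_mul]
  -- empirical convergence for h₁
  have hA : Tendsto (fun n : ℕ => (1 / (n : ℝ)) * ∑ i ∈ Finset.range n, h₁ (t i, y i))
      atTop (nhds (∫ p, h₁ p ∂P)) := by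
    have := hweak (BoundedContinuousFunction.ofNormedAddCommGroup h₁ hh₁cont _ hh₁bd)
    simpa only [BoundedContinuousFunction.coe_ofNormedAddCommGroup] using this
  -- the H-valued empirical means
  set G : I × ℝ → H := fun p => uf M p • η p.1 with hGdef
  have hGcont : Continuous G := by
    simp only [hGdef]
    exact (hufcont M).smul (hηcont.comp continuous_fst)
  have hGbd : ∀ p : I × ℝ, ‖G p‖ ≤ (M : ℝ) * α := by
    intro p
    simp only [hGdef]
    rw [norm_smul, Real.norm_eq_abs]
    exact mul_le_mul (hufbd M p) (hηbd p.1) (norm_nonneg _) (Nat.cast_nonneg M)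
  set gseq : ℕ → H := fun n => (1 / (n : ℝ)) • ∑ i ∈ Finset.range n, G (t i, y i) with hgseqdef
  have hginner : ∀ (x : H) (n : ℕ), ⟪gseq n, x⟫
      = (1 / (n : ℝ)) * ∑ i ∈ Finset.range n, uf M (t i, y i) * ⟪η (t i), x⟫ := by
    intro x n
    simp only [hgseqdef, hGdef]
    rw [real_inner_smul_left, sum_inner]
    congr 1
    exact Finset.sum_congr rfl fun i _ => real_inner_smul_left _ _ _
  have hgν : Tendsto (fun n => ⟪gseq n, ν⟫) atTop (nhds (∫ p, h₂ p ∂P)) := by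
    have hw := hweak (BoundedContinuousFunction.ofNormedAddCommGroup h₂ hh₂cont _ hh₂bd)
    simp only [BoundedContinuousFunction.coe_ofNormedAddCommGroup] at hw
    apply hw.congr
    intro n
    rw [hginner ν n]
  have happrox : ∀ ε' : ℝ, 0 < ε' → ∃ w : H, ∀ᶠ n : ℕ in atTop, ‖gseq n - w‖ ≤ ε' := by
    intro ε' hε'
    obtain ⟨w, hw⟩ := gseq_approx P hPmass (fun i => ((t i, y i) : I × ℝ))
      (fun h => hweak h) G hGcont ((M : ℝ) * α) (by positivity) hGbd ε' hε'
    exact ⟨w, hw⟩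
  obtain ⟨C, hC0, hC⟩ := weak_bounded ν νn hν
  have hfinal : Tendsto (fun n => ⟪gseq n, νn n⟫) atTop (nhds (∫ p, h₂ p ∂P)) :=
    inner_pair_tendsto ν νn hν C hC0 hC gseq _ happrox hgν
  -- the comparison sequence
  have hd : Tendsto (fun n : ℕ => (1 / (n : ℝ)) * ∑ i ∈ Finset.range n, h₁ (t i, y i)
      - 2 * ⟪gseq n, νn n⟫) atTop
      (nhds (∫ p, h₁ p ∂P - 2 * ∫ p, h₂ p ∂P)) :=
    hA.sub (hfinal.const_mul 2)
  have hdle : ∀ n : ℕ, (1 / (n : ℝ)) * ∑ i ∈ Finset.range n, h₁ (t i, y i)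
      - 2 * ⟪gseq n, νn n⟫
      ≤ (1 / (n : ℝ)) * ∑ i ∈ Finset.range n, (y i - ⟪η (t i), νn n⟫) ^ 2
        + lam n * ‖(H1.orthogonalProjectionOnto (νn n) : H)‖ ^ 2 := by
    intro n
    have h2 := hginner (νn n) n
    have hkey : (1 / (n : ℝ)) * ∑ i ∈ Finset.range n, h₁ (t i, y i) - 2 * ⟪gseq n, νn n⟫
        = (1 / (n : ℝ)) * ∑ i ∈ Finset.range n,
            (h₁ (t i, y i) - 2 * (uf M (t i, y i) * ⟪η (t i), νn n⟫)) := by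
      rw [h2]
      have h3 : ∑ i ∈ Finset.range n,
          (h₁ (t i, y i) - 2 * (uf M (t i, y i) * ⟪η (t i), νn n⟫))
          = ∑ i ∈ Finset.range n, h₁ (t i, y i)
            - 2 * ∑ i ∈ Finset.range n, uf M (t i, y i) * ⟪η (t i), νn n⟫ := by
        rw [Finset.sum_sub_distrib, ← Finset.mul_sum]
      rw [h3]
      ring
    rw [hkey]
    have hle : ∀ i ∈ Finset.range n,
        h₁ (t i, y i) - 2 * (uf M (t i, y i) * ⟪η (t i), νn n⟫)
        ≤ (y i - ⟪η (t i), νn n⟫) ^ 2 := by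
      intro i _
      simp only [hh₁def]
      nlinarith [sq_nonneg (y i - ⟪η (t i), νn n⟫ - uf M (t i, y i))]
    have hsum := Finset.sum_le_sum hle
    have hmul := mul_le_mul_of_nonneg_left hsum
      (by positivity : (0 : ℝ) ≤ 1 / (n : ℝ))
    have hlam' : 0 ≤ lam n * ‖(H1.orthogonalProjectionOnto (νn n) : H)‖ ^ 2 :=
      mul_nonneg (hlam n) (sq_nonneg _)
    linarith
  -- EReal conclusion
  have hdE : Tendsto (fun n : ℕ =>
      (((1 / (n : ℝ)) * ∑ i ∈ Finset.range n, h₁ (t i, y i) - 2 * ⟪gseq n, νn n⟫ : ℝ) : EReal))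
      atTop (nhds ((∫ p, h₁ p ∂P - 2 * ∫ p, h₂ p ∂P : ℝ) : EReal)) :=
    EReal.tendsto_coe.mpr hd
  have hliminf1 : ((∫ p, h₁ p ∂P - 2 * ∫ p, h₂ p ∂P : ℝ) : EReal)
      = liminf (fun n : ℕ =>
          (((1 / (n : ℝ)) * ∑ i ∈ Finset.range n, h₁ (t i, y i)
            - 2 * ⟪gseq n, νn n⟫ : ℝ) : EReal)) atTop :=
    (hdE.liminf_eq).symm
  have hle2 : liminf (fun n : ℕ =>
      (((1 / (n : ℝ)) * ∑ i ∈ Finset.range n, h₁ (t i, y i)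
        - 2 * ⟪gseq n, νn n⟫ : ℝ) : EReal)) atTop
      ≤ liminf (fun n : ℕ =>
          (((1 / (n : ℝ)) * ∑ i ∈ Finset.range n, (y i - ⟪η (t i), νn n⟫) ^ 2
            + lam n * ‖(H1.orthogonalProjectionOnto (νn n) : H)‖ ^ 2 : ℝ) : EReal)) atTop :=
    liminf_le_liminf (Eventually.of_forall fun n => EReal.coe_le_coe_iff.mpr (hdle n))
  have hfin : ∫ z : I × ℝ, (z.2 - ⟪η z.1, ν⟫) ^ 2 ∂P - ε
      ≤ ∫ p, h₁ p ∂P - 2 * ∫ p, h₂ p ∂P := by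
    have h5 := hM.le
    rw [hqint_eq] at h5
    exact h5
  calc ((∫ z : I × ℝ, (z.2 - ⟪η z.1, ν⟫) ^ 2 ∂P - ε : ℝ) : EReal)
      ≤ ((∫ p, h₁ p ∂P - 2 * ∫ p, h₂ p ∂P : ℝ) : EReal) := EReal.coe_le_coe_iff.mpr hfin
  _ = liminf (fun n : ℕ =>
        (((1 / (n : ℝ)) * ∑ i ∈ Finset.range n, h₁ (t i, y i)
          - 2 * ⟪gseq n, νn n⟫ : ℝ) : EReal)) atTop := hliminf1
  _ ≤ liminf (fun n : ℕ =>
        (((1 / (n : ℝ)) * ∑ i ∈ Finset.range n, (y i - ⟪η (t i), νn n⟫) ^ 2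
          + lam n * ‖(H1.orthogonalProjectionOnto (νn n) : H)‖ ^ 2 : ℝ) : EReal)) atTop := hle2
end

section
/- Suppose the empirical measures P_n = (1/n) Σ_{i=1}^n δ_{(t_i, y_i)} converge weakly to a Borel probability measure P on I × ℝ, that ∫ y² P_n(d(t,y)) → ∫ y² P(d(t,y)) < ∞, and that λ_n ≥ 0 with λ_n → 0. Then for every fixed ν ∈ H, (1/n) Σ_{i=1}^n (y_i − ⟨η_{t_i}, ν⟩)² + λ_n ‖χ1 ν‖² → ∫_{I×ℝ} (y − ⟨η_t, ν⟩)² P(d(t,y)); in particular the constant sequence ν^n = ν is a recovery sequence for the Γ-limit. -/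
open MeasureTheory Filter
open scoped RealInnerProductSpace

private lemma clamp_diff (M w : ℝ) (hM : 0 < M) :
    |w - max (-M) (min M w)| ≤ w ^ 2 / M := by
  rcases le_total w (-M) with h | h
  · rw [min_eq_right (by linarith), max_eq_left h, sub_neg_eq_add,
      abs_of_nonpos (by linarith), le_div_iff₀ hM]
    nlinarith
  · rcases le_total M w with h2 | h2
    · rw [min_eq_left h2, max_eq_right (by linarith : -M ≤ M),
        abs_of_nonneg (by linarith), le_div_iff₀ hM]
      nlinarith
    · rw [min_eq_right h2, max_eq_right h, sub_self, abs_zero]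
      positivity

/-- **recovery sequence.** Let `H` be a real Hilbert space with orthogonal
projection `χ1` onto a closed subspace, `I ⊆ ℝ^d`, `η : I → H` continuous with `‖η t‖ ≤ α`,
and `(t i, y i)` a sequence in `I × ℝ` whose empirical measures converge weakly to the Borel
probability measure `P`, with convergence of second moments
`(1/n) ∑_{i<n} (y i)² → ∫ y² dP < ∞`. If `λ n ≥ 0` and `λ n → 0`, then for every fixed
`ν ∈ H`,
`(1/n) ∑_{i<n} (y i − ⟪η (t i), ν⟫)² + λ n ‖χ1 ν‖² → ∫ (y − ⟪η t, ν⟫)² dP`;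
in particular the constant sequence is a recovery sequence for the Γ-limit. -/
theorem gamma_recovery_sequence
    {H : Type*} [NormedAddCommGroup H] [InnerProductSpace ℝ H]
    (H1 : Submodule ℝ H) [H1.HasOrthogonalProjection]
    {d : ℕ} (I : Set (EuclideanSpace ℝ (Fin d)))
    (η : I → H) (α : ℝ) (hηbd : ∀ s : I, ‖η s‖ ≤ α) (hηcont : Continuous η)
    (t : ℕ → I) (y : ℕ → ℝ)
    (lam : ℕ → ℝ) (hlam : ∀ n, 0 ≤ lam n) (hlam0 : Tendsto lam atTop (nhds 0))
    (P : Measure (I × ℝ)) [IsProbabilityMeasure P]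
    (hweak : ∀ h : BoundedContinuousFunction (I × ℝ) ℝ,
      Tendsto (fun n : ℕ => (1 / (n : ℝ)) * ∑ i ∈ Finset.range n, h (t i, y i))
        atTop (nhds (∫ z, h z ∂P)))
    (hyL2 : Integrable (fun z : I × ℝ => z.2 ^ 2) P)
    (hy2 : Tendsto (fun n : ℕ => (1 / (n : ℝ)) * ∑ i ∈ Finset.range n, (y i) ^ 2)
      atTop (nhds (∫ z : I × ℝ, z.2 ^ 2 ∂P)))
    (ν : H) :
    Tendsto (fun n : ℕ =>
        (1 / (n : ℝ)) * ∑ i ∈ Finset.range n, (y i - ⟪η (t i), ν⟫) ^ 2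
          + lam n * ‖(H1.orthogonalProjectionOnto ν : H)‖ ^ 2)
      atTop (nhds (∫ z : I × ℝ, (z.2 - ⟪η z.1, ν⟫) ^ 2 ∂P)) := by
  -- basic objects
  set g : I → ℝ := fun s => ⟪η s, ν⟫ with hgdef
  have hgcont : Continuous g := hηcont.inner continuous_const
  set C : ℝ := α * ‖ν‖ with hCdef
  have hα0 : 0 ≤ α := le_trans (norm_nonneg _) (hηbd (t 0))
  have hC0 : 0 ≤ C := mul_nonneg hα0 (norm_nonneg _)
  have hgbd : ∀ s : I, |g s| ≤ C := by
    intro s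
    calc |g s| ≤ ‖η s‖ * ‖ν‖ := abs_real_inner_le_norm _ _
    _ ≤ α * ‖ν‖ := mul_le_mul_of_nonneg_right (hηbd s) (norm_nonneg _)
  set h : I × ℝ → ℝ := fun z => g z.1 ^ 2 - 2 * z.2 * g z.1 with hhdef
  have hFh : ∀ z : I × ℝ, (z.2 - g z.1) ^ 2 = z.2 ^ 2 + h z := by
    intro z; simp only [hhdef]; ring
  have hhcont : Continuous h := by
    apply Continuous.sub
    · exact (hgcont.comp continuous_fst).pow 2
    · exact (continuous_const.mul continuous_snd).mul (hgcont.comp continuous_fst)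
  have habs : ∀ w : ℝ, |w| ≤ 1 + w ^ 2 := by
    intro w; nlinarith [sq_nonneg (|w| - 1), sq_abs w, abs_nonneg w]
  have hhInt : Integrable h P := by
    refine Integrable.mono' ((integrable_const (C ^ 2 + 2 * C)).add (hyL2.const_mul (2 * C)))
      hhcont.aestronglyMeasurable (ae_of_all _ fun z => ?_)
    have h1 := hgbd z.1
    have h2 := habs z.2
    have h3 : |h z| ≤ |g z.1 ^ 2| + |2 * z.2 * g z.1| := abs_sub _ _
    rw [Real.norm_eq_abs]
    have h4 : |g z.1 ^ 2| = |g z.1| ^ 2 := abs_pow _ 2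
    have h5 : |2 * z.2 * g z.1| = 2 * |z.2| * |g z.1| := by
      rw [abs_mul, abs_mul]; norm_num
    simp only [Pi.add_apply]
    nlinarith [abs_nonneg (g z.1), abs_nonneg z.2, sq_abs z.2]
  -- key limit for h
  have T : Tendsto (fun n : ℕ => (1 / (n : ℝ)) * ∑ i ∈ Finset.range n, h (t i, y i))
      atTop (nhds (∫ z, h z ∂P)) := by
    rw [Metric.tendsto_atTop]
    intro ε hε
    set J : ℝ := ∫ z : I × ℝ, z.2 ^ 2 ∂P with hJdef
    have hJ0 : 0 ≤ J := integral_nonneg fun z => sq_nonneg _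
    set M : ℝ := 8 * (C + 1) * (J + 1) / ε with hMdef
    have hM0 : 0 < M := by positivity
    have hkey : 2 * C / M * (J + 1) ≤ ε / 4 := by
      rw [div_mul_eq_mul_div, div_le_iff₀ hM0]
      have : ε / 4 * M = 2 * (C + 1) * (J + 1) := by
        rw [hMdef]; field_simp; ring
      rw [this]; nlinarith
    -- the truncated function
    set hM : I × ℝ → ℝ := fun z => g z.1 ^ 2 - 2 * max (-M) (min M z.2) * g z.1 with hhMdef
    have hMcont : Continuous hM := by
      apply Continuous.sub
      · exact (hgcont.comp continuous_fst).pow 2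
      · exact (continuous_const.mul ((continuous_const.max
          (continuous_const.min continuous_snd)))).mul (hgcont.comp continuous_fst)
    have hclampbd : ∀ w : ℝ, |max (-M) (min M w)| ≤ M := by
      intro w
      rw [abs_le]
      exact ⟨le_max_left _ _, max_le (by linarith) (min_le_left _ _)⟩
    have hMbd : ∀ z : I × ℝ, ‖hM z‖ ≤ C ^ 2 + 2 * M * C := by
      intro z
      rw [Real.norm_eq_abs]
      have h1 := hgbd z.1
      have h2 := hclampbd z.2
      have h3 : |hM z| ≤ |g z.1 ^ 2| + |2 * max (-M) (min M z.2) * g z.1| := abs_sub _ _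
      have h4 : |g z.1 ^ 2| = |g z.1| ^ 2 := abs_pow _ 2
      have h5 : |2 * max (-M) (min M z.2) * g z.1|
          = 2 * |max (-M) (min M z.2)| * |g z.1| := by
        rw [abs_mul, abs_mul]; norm_num
      nlinarith [abs_nonneg (g z.1), abs_nonneg (max (-M) (min M z.2))]
    set hb : BoundedContinuousFunction (I × ℝ) ℝ :=
      BoundedContinuousFunction.ofNormedAddCommGroup hM hMcont (C ^ 2 + 2 * M * C) hMbd
      with hbdef
    have hbcoe : ∀ z, hb z = hM z := fun z => rfl
    have hweakM : Tendsto (fun n : ℕ => (1 / (n : ℝ)) * ∑ i ∈ Finset.range n, hM (t i, y i))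
        atTop (nhds (∫ z, hM z ∂P)) := by
      have := hweak hb
      simpa only [hbcoe] using this
    have hMInt : Integrable hM P := by
      have := hb.integrable P
      simpa only [hbdef, BoundedContinuousFunction.coe_ofNormedAddCommGroup] using this
    -- pointwise difference bound
    have hdiff : ∀ z : I × ℝ, |h z - hM z| ≤ 2 * C / M * z.2 ^ 2 := by
      intro z
      have h1 := hgbd z.1
      have h2 := clamp_diff M z.2 hM0
      have h3 : h z - hM z = 2 * (max (-M) (min M z.2) - z.2) * g z.1 := by
        simp only [hhdef, hhMdef]; ring
      rw [h3, abs_mul, abs_mul, abs_sub_comm, show |(2:ℝ)| = 2 by norm_num]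
      calc 2 * |z.2 - max (-M) (min M z.2)| * |g z.1|
          ≤ 2 * (z.2 ^ 2 / M) * C := by
            apply mul_le_mul (by linarith) h1 (abs_nonneg _) (by positivity)
        _ = 2 * C / M * z.2 ^ 2 := by field_simp
    -- sum difference bound
    have hsumdiff : ∀ n : ℕ,
        |(1 / (n : ℝ)) * ∑ i ∈ Finset.range n, h (t i, y i)
          - (1 / (n : ℝ)) * ∑ i ∈ Finset.range n, hM (t i, y i)|
        ≤ 2 * C / M * ((1 / (n : ℝ)) * ∑ i ∈ Finset.range n, (y i) ^ 2) := by
      intro n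
      rw [← mul_sub, ← Finset.sum_sub_distrib, abs_mul,
        abs_of_nonneg (by positivity : (0:ℝ) ≤ 1 / (n:ℝ))]
      calc (1 / (n : ℝ)) * |∑ i ∈ Finset.range n, (h (t i, y i) - hM (t i, y i))|
          ≤ (1 / (n : ℝ)) * ∑ i ∈ Finset.range n, |h (t i, y i) - hM (t i, y i)| :=
            mul_le_mul_of_nonneg_left (Finset.abs_sum_le_sum_abs _ _) (by positivity)
        _ ≤ (1 / (n : ℝ)) * ∑ i ∈ Finset.range n, 2 * C / M * (y i) ^ 2 :=
            mul_le_mul_of_nonneg_left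
              (Finset.sum_le_sum fun i _ => hdiff (t i, y i)) (by positivity)
        _ = 2 * C / M * ((1 / (n : ℝ)) * ∑ i ∈ Finset.range n, (y i) ^ 2) := by
            rw [← Finset.mul_sum]; ring
    -- integral difference bound
    have hIdiff : |∫ z, hM z ∂P - ∫ z, h z ∂P| ≤ 2 * C / M * J := by
      rw [← integral_sub hMInt hhInt]
      calc |∫ z, (hM z - h z) ∂P| ≤ ∫ z, |hM z - h z| ∂P := by
            simpa [Real.norm_eq_abs] using
              norm_integral_le_integral_norm (μ := P) (fun z => hM z - h z)
        _ ≤ ∫ z, 2 * C / M * z.2 ^ 2 ∂P := by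
            refine integral_mono (hMInt.sub hhInt).abs (hyL2.const_mul _) fun z => ?_
            rw [abs_sub_comm]; exact hdiff z
        _ = 2 * C / M * J := by rw [integral_const_mul]
    -- eventual bounds
    have hEv1 : ∀ᶠ n : ℕ in atTop,
        (1 / (n : ℝ)) * ∑ i ∈ Finset.range n, (y i) ^ 2 ≤ J + 1 := by
      filter_upwards [hy2.eventually_lt_const (by linarith : J < J + 1)] with n hn
      exact le_of_lt hn
    have hEv2 : ∀ᶠ n : ℕ in atTop,
        dist ((1 / (n : ℝ)) * ∑ i ∈ Finset.range n, hM (t i, y i)) (∫ z, hM z ∂P)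
          < ε / 4 := by
      rw [Metric.tendsto_atTop] at hweakM
      obtain ⟨N, hN⟩ := hweakM (ε / 4) (by positivity)
      exact eventually_atTop.2 ⟨N, hN⟩
    rw [← eventually_atTop]
    filter_upwards [hEv1, hEv2] with n h1 h2
    rw [Real.dist_eq]
    have e1 : |(1 / (n : ℝ)) * ∑ i ∈ Finset.range n, h (t i, y i)
        - (1 / (n : ℝ)) * ∑ i ∈ Finset.range n, hM (t i, y i)| ≤ ε / 4 := by
      calc _ ≤ 2 * C / M * ((1 / (n : ℝ)) * ∑ i ∈ Finset.range n, (y i) ^ 2) := hsumdiff n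
        _ ≤ 2 * C / M * (J + 1) := mul_le_mul_of_nonneg_left h1 (by positivity)
        _ ≤ ε / 4 := hkey
    have e2 : |(1 / (n : ℝ)) * ∑ i ∈ Finset.range n, hM (t i, y i) - ∫ z, hM z ∂P|
        < ε / 4 := by rw [← Real.dist_eq]; exact h2
    have e3 : |∫ z, hM z ∂P - ∫ z, h z ∂P| ≤ ε / 4 := by
      calc _ ≤ 2 * C / M * J := hIdiff
        _ ≤ 2 * C / M * (J + 1) := mul_le_mul_of_nonneg_left (by linarith) (by positivity)
        _ ≤ ε / 4 := hkey
    calc |(1 / (n : ℝ)) * ∑ i ∈ Finset.range n, h (t i, y i) - ∫ z, h z ∂P|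
        ≤ |(1 / (n : ℝ)) * ∑ i ∈ Finset.range n, h (t i, y i)
            - (1 / (n : ℝ)) * ∑ i ∈ Finset.range n, hM (t i, y i)|
          + |(1 / (n : ℝ)) * ∑ i ∈ Finset.range n, hM (t i, y i) - ∫ z, h z ∂P| :=
          abs_sub_le _ _ _
      _ ≤ |(1 / (n : ℝ)) * ∑ i ∈ Finset.range n, h (t i, y i)
            - (1 / (n : ℝ)) * ∑ i ∈ Finset.range n, hM (t i, y i)|
          + (|(1 / (n : ℝ)) * ∑ i ∈ Finset.range n, hM (t i, y i) - ∫ z, hM z ∂P|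
            + |∫ z, hM z ∂P - ∫ z, h z ∂P|) := by
          gcongr
          exact abs_sub_le _ _ _
      _ < ε := by linarith
  -- assemble
  have hlimlam : Tendsto (fun n : ℕ => lam n * ‖(H1.orthogonalProjectionOnto ν : H)‖ ^ 2)
      atTop (nhds 0) := by
    simpa using hlam0.mul_const (‖(H1.orthogonalProjectionOnto ν : H)‖ ^ 2)
  have hIntEq : ∫ z : I × ℝ, (z.2 - ⟪η z.1, ν⟫) ^ 2 ∂P
      = (∫ z : I × ℝ, z.2 ^ 2 ∂P) + ∫ z, h z ∂P := by
    rw [← integral_add hyL2 hhInt]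
    congr 1
    funext z
    exact hFh z
  have hfun : ∀ n : ℕ,
      (1 / (n : ℝ)) * ∑ i ∈ Finset.range n, (y i - ⟪η (t i), ν⟫) ^ 2
          + lam n * ‖(H1.orthogonalProjectionOnto ν : H)‖ ^ 2
      = ((1 / (n : ℝ)) * ∑ i ∈ Finset.range n, (y i) ^ 2
          + (1 / (n : ℝ)) * ∑ i ∈ Finset.range n, h (t i, y i))
        + lam n * ‖(H1.orthogonalProjectionOnto ν : H)‖ ^ 2 := by
    intro n
    congr 1
    rw [← mul_add, ← Finset.sum_add_distrib]
    congr 1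
    apply Finset.sum_congr rfl
    intro i _
    exact hFh (t i, y i)
  rw [hIntEq]
  have := (hy2.add T).add hlimlam
  rw [add_zero] at this
  convert this using 2 with n
  exact hfun n
end

section
/- Let e_1, e_2, … be an orthonormal sequence in H1, let α > 0, set η_i = α e_i, and for λ > 0 let G_{n,λ} μ = (1/n) Σ_{i=1}^n ⟨η_i, μ⟩ η_i + λ χ1 μ. Let ε_1, …, ε_n be independent real random variables with mean 0 and variance σ² > 0, and set ν_n = (1/n) Σ_{i=1}^n ε_i η_i. Then G_{n,λ} e_i = (α²/n + λ) e_i for i ≤ n, ν_n lies in span{e_1, …, e_n} so that G_{n,λ}^{-1} ν_n is well defined, and E[ ‖G_{n,λ}^{-1} ν_n‖² ] = σ² α² / ( n (α²/n + λ)² ). In particular, if λ = λ_n = n^{−p} with p > 1/2, then E[ ‖G_{n,λ_n}^{-1} ν_n‖² ] → ∞ as n → ∞. -/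
open MeasureTheory ProbabilityTheory Filter
open scoped RealInnerProductSpace

/-- **sharpness of the scaling regime.** Let `H1` be an
infinite-dimensional closed subspace of a real Hilbert space `H` with orthogonal projection
`χ1`, let `(e i)` be an orthonormal sequence in `H1`, `α > 0`, `η i = α • e i`, and for
`λ > 0` let `G_{n,λ} μ = (1/n) ∑_{i<n} ⟪η i, μ⟫ η i + λ χ1 μ`. Let `ε_1, …, ε_n, …` be
independent real random variables with mean `0` and variance `σ² > 0` and set
`ν_n = (1/n) ∑_{i<n} ε i • η i`. Then `G_{n,λ} (e i) = (α²/n + λ) e i` for `i < n`, `ν_n`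
lies in `span {e_0, …, e_{n-1}}` so that `G_{n,λ}⁻¹ ν_n` is well defined (it equals
`(α²/n + λ)⁻¹ ν_n`), and `E[‖G_{n,λ}⁻¹ ν_n‖²] = σ² α² / (n (α²/n + λ)²)`. In particular, if
`λ = λ_n = n^{−p}` with `p > 1/2`, then `E[‖G_{n,λ_n}⁻¹ ν_n‖²] → ∞` as `n → ∞`. -/
theorem sharpness_blow_up_construction
    {H : Type*} [NormedAddCommGroup H] [InnerProductSpace ℝ H]
    (H1 : Submodule ℝ H) [H1.HasOrthogonalProjection]
    (hH1inf : ¬ FiniteDimensional ℝ H1)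
    (e : ℕ → H) (he : Orthonormal ℝ e) (heH1 : ∀ i, e i ∈ H1)
    (α : ℝ) (hα : 0 < α) (η : ℕ → H) (hη : ∀ i, η i = α • e i)
    {Ω : Type*} [MeasurableSpace Ω] (P : Measure Ω) [IsProbabilityMeasure P]
    (ε : ℕ → Ω → ℝ) (σ : ℝ) (hσ : 0 < σ)
    (hindep : iIndepFun ε P)
    (hL2 : ∀ i, MemLp (ε i) 2 P)
    (hmean : ∀ i, ∫ ω, ε i ω ∂P = 0)
    (hvar : ∀ i, ∫ ω, (ε i ω) ^ 2 ∂P = σ ^ 2)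
    (G : ℕ → ℝ → H → H)
    (hG : ∀ (n : ℕ) (lam : ℝ) (μ : H), G n lam μ
      = ((1 : ℝ) / n) • ∑ i ∈ Finset.range n, ⟪η i, μ⟫ • η i
        + lam • (H1.orthogonalProjectionOnto μ : H))
    (ν : ℕ → Ω → H)
    (hν : ∀ (n : ℕ) (ω : Ω), ν n ω = ((1 : ℝ) / n) • ∑ i ∈ Finset.range n, ε i ω • η i) :
    (∀ (n : ℕ) (lam : ℝ), 0 < lam → ∀ i < n,
      G n lam (e i) = (α ^ 2 / n + lam) • e i) ∧
    (∀ (n : ℕ) (ω : Ω), ν n ω ∈ Submodule.span ℝ (e '' Set.Iio n)) ∧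
    (∀ n : ℕ, 0 < n → ∀ lam : ℝ, 0 < lam →
      (∀ ω : Ω, G n lam ((α ^ 2 / n + lam)⁻¹ • ν n ω) = ν n ω) ∧
      ∫ ω, ‖(α ^ 2 / n + lam)⁻¹ • ν n ω‖ ^ 2 ∂P
        = σ ^ 2 * α ^ 2 / (n * (α ^ 2 / n + lam) ^ 2)) ∧
    (∀ p : ℝ, 1 / 2 < p →
      Tendsto (fun n : ℕ => σ ^ 2 * α ^ 2 / (n * (α ^ 2 / n + (n : ℝ) ^ (-p)) ^ 2))
        atTop atTop) := by
  classical
  have hite := orthonormal_iff_ite.mp he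
  -- eigenvalue equation
  have h1 : ∀ (n : ℕ) (lam : ℝ), 0 < lam → ∀ i < n,
      G n lam (e i) = (α ^ 2 / n + lam) • e i := by
    intro n lam hlam i hi
    have hproj : (H1.orthogonalProjectionOnto (e i) : H) = e i :=
      H1.starProjection_eq_self_iff.mpr (heH1 i)
    have hsum : ∑ j ∈ Finset.range n, ⟪η j, e i⟫ • η j = (α ^ 2 : ℝ) • e i := by
      rw [Finset.sum_eq_single_of_mem i (Finset.mem_range.mpr hi)]
      · rw [hη, real_inner_smul_left, hite, if_pos rfl, smul_smul]
        ring_nf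
      · intro j _ hj
        rw [hη, real_inner_smul_left, hite, if_neg hj]
        simp
    rw [hG, hsum, hproj, smul_smul, ← add_smul]
    congr 1
    ring
  -- linearity of G
  have hGadd : ∀ (n : ℕ) (lam : ℝ) (μ₁ μ₂ : H),
      G n lam (μ₁ + μ₂) = G n lam μ₁ + G n lam μ₂ := by
    intro n lam μ₁ μ₂
    simp only [hG, inner_add_right, add_smul, Finset.sum_add_distrib, map_add,
      Submodule.coe_add, smul_add]
    abel
  have hGsmul : ∀ (n : ℕ) (lam : ℝ) (c : ℝ) (μ : H),
      G n lam (c • μ) = c • G n lam μ := by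
    intro n lam c μ
    have hps : (H1.orthogonalProjectionOnto (c • μ) : H) = c • (H1.orthogonalProjectionOnto μ : H) := by
      rw [(H1.orthogonalProjectionOnto).map_smul]; rfl
    rw [hG, hG, hps, smul_comm lam c]
    simp only [inner_smul_right, mul_smul]
    rw [← Finset.smul_sum, smul_comm ((1 : ℝ) / n) c, smul_add]
  have hGlin : ∀ (n : ℕ) (lam : ℝ) (s : Finset ℕ) (f : ℕ → ℝ),
      G n lam (∑ i ∈ s, f i • e i) = ∑ i ∈ s, f i • G n lam (e i) := by
    intro n lam s f
    let L : H →ₗ[ℝ] H :=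
      { toFun := G n lam, map_add' := hGadd n lam, map_smul' := hGsmul n lam }
    show L (∑ i ∈ s, f i • e i) = ∑ i ∈ s, f i • L (e i)
    rw [map_sum]
    exact Finset.sum_congr rfl fun i _ => L.map_smul (f i) (e i)
  refine ⟨h1, ?_, ?_, ?_⟩
  · -- membership in the span
    intro n ω
    rw [hν n ω]
    refine Submodule.smul_mem _ _ (Submodule.sum_mem _ fun i hi => ?_)
    rw [hη]
    exact Submodule.smul_mem _ _ (Submodule.smul_mem _ _
      (Submodule.subset_span ⟨i, Finset.mem_range.mp hi, rfl⟩))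
  · -- inverse and expected squared norm
    intro n hn lam hlam
    have hn0 : (n : ℝ) ≠ 0 := Nat.cast_ne_zero.mpr hn.ne'
    have hnpos : (0 : ℝ) < n := Nat.cast_pos.mpr hn
    have hdpos : 0 < α ^ 2 / n + lam :=
      add_pos (div_pos (by positivity) hnpos) hlam
    set c : ℝ := (α ^ 2 / n + lam)⁻¹ with hc
    have hcd : c * (α ^ 2 / n + lam) = 1 := inv_mul_cancel₀ hdpos.ne'
    have hrep : ∀ ω, ν n ω
        = ∑ i ∈ Finset.range n, ((1 / (n : ℝ)) * (ε i ω * α)) • e i := by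
      intro ω
      rw [hν n ω, Finset.smul_sum]
      exact Finset.sum_congr rfl fun i _ => by rw [hη, smul_smul, smul_smul, mul_assoc]
    constructor
    · intro ω
      rw [hrep ω, Finset.smul_sum]
      simp only [smul_smul]
      rw [hGlin]
      refine Finset.sum_congr rfl fun i hi => ?_
      rw [h1 n lam hlam i (Finset.mem_range.mp hi), smul_smul, mul_right_comm, hcd, one_mul]
    · have hnorm : ∀ ω, ‖c • ν n ω‖ ^ 2
          = (c ^ 2 * ((1 / (n : ℝ)) ^ 2 * α ^ 2)) * ∑ i ∈ Finset.range n, ε i ω ^ 2 := by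
        intro ω
        rw [hrep ω, Finset.smul_sum]
        simp only [smul_smul]
        rw [← real_inner_self_eq_norm_sq, he.inner_sum]
        simp only [conj_trivial]
        rw [Finset.mul_sum]
        exact Finset.sum_congr rfl fun i _ => by ring
      simp only [hnorm]
      rw [MeasureTheory.integral_const_mul,
        MeasureTheory.integral_finset_sum _ (fun i _ => (hL2 i).integrable_sq)]
      simp only [hvar, Finset.sum_const, Finset.card_range, nsmul_eq_mul]
      rw [hc]
      field_simp
  · -- blow up
    intro p hp
    have hq : (1 : ℝ) / 2 < min p 1 := lt_min hp (by norm_num)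
    set q : ℝ := min p 1 with hqdef
    have hC : (0 : ℝ) < σ ^ 2 * α ^ 2 := by positivity
    have hdenom : Tendsto (fun n : ℕ => (n : ℝ) * (α ^ 2 / n + (n : ℝ) ^ (-p)) ^ 2)
        atTop (nhdsWithin 0 (Set.Ioi 0)) := by
      rw [tendsto_nhdsWithin_iff]
      constructor
      · have hb : Tendsto (fun n : ℕ => (α ^ 2 + 1) ^ 2 * (n : ℝ) ^ (1 - 2 * q))
            atTop (nhds 0) := by
          have h0 : Tendsto (fun x : ℝ => x ^ (-(2 * q - 1))) atTop (nhds 0) :=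
            tendsto_rpow_neg_atTop (by linarith)
          have := (h0.comp tendsto_natCast_atTop_atTop).const_mul ((α ^ 2 + 1) ^ 2)
          simpa [Function.comp, show -(2 * q - 1) = 1 - 2 * q by ring] using this
        refine squeeze_zero' ?_ ?_ hb
        · filter_upwards [eventually_ge_atTop 1] with n hn
          have hn1 : (1 : ℝ) ≤ n := by exact_mod_cast hn
          positivity
        · filter_upwards [eventually_ge_atTop 1] with n hn
          have hn1 : (1 : ℝ) ≤ n := by exact_mod_cast hn
          have hnpos : (0 : ℝ) < n := by linarith
          have h1le : α ^ 2 / n ≤ α ^ 2 * (n : ℝ) ^ (-q) := by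
            rw [div_eq_mul_inv, ← Real.rpow_neg_one]
            exact mul_le_mul_of_nonneg_left
              (Real.rpow_le_rpow_of_exponent_le hn1
                (by simp only [neg_le_neg_iff]; exact min_le_right p 1)) (by positivity)
          have h2le : (n : ℝ) ^ (-p) ≤ 1 * (n : ℝ) ^ (-q) := by
            rw [one_mul]
            exact Real.rpow_le_rpow_of_exponent_le hn1
              (by simp only [neg_le_neg_iff]; exact min_le_left p 1)
          have hsumle : α ^ 2 / n + (n : ℝ) ^ (-p) ≤ (α ^ 2 + 1) * (n : ℝ) ^ (-q) := by
            rw [add_mul]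
            exact add_le_add h1le h2le
          have hnn : (0 : ℝ) ≤ α ^ 2 / n + (n : ℝ) ^ (-p) := by positivity
          calc (n : ℝ) * (α ^ 2 / n + (n : ℝ) ^ (-p)) ^ 2
              ≤ (n : ℝ) * ((α ^ 2 + 1) * (n : ℝ) ^ (-q)) ^ 2 :=
                mul_le_mul_of_nonneg_left (pow_le_pow_left₀ hnn hsumle 2) hnpos.le
            _ = (α ^ 2 + 1) ^ 2 * ((n : ℝ) ^ (1 : ℝ) * ((n : ℝ) ^ (-q)) ^ 2) := by
                rw [Real.rpow_one]; ring
            _ = (α ^ 2 + 1) ^ 2 * (n : ℝ) ^ (1 - 2 * q) := by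
                congr 1
                rw [← Real.rpow_natCast ((n : ℝ) ^ (-q)) 2, ← Real.rpow_mul hnpos.le,
                  ← Real.rpow_add hnpos]
                congr 1
                push_cast
                ring
      · filter_upwards [eventually_ge_atTop 1] with n hn
        have hn1 : (1 : ℝ) ≤ n := by exact_mod_cast hn
        have hnpos : (0 : ℝ) < n := by linarith
        have := Real.rpow_pos_of_pos hnpos (-p)
        have : (0 : ℝ) < α ^ 2 / n + (n : ℝ) ^ (-p) := by positivity
        exact Set.mem_Ioi.mpr (by positivity)
    have := (tendsto_inv_nhdsGT_zero.comp hdenom).const_mul_atTop hC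
    simpa [Function.comp, div_eq_mul_inv] using this
end
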